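/- arXiv:2103.13478 — 6 statements merged into one kernel-verified Lean document; each statement's English description precedes it below -/
import Mathlib

section
/- Fix k ≥ 1, a ∈ ℂ, and x_1 ∈ ℂ. Define f_n recursively by f_0 = x_1, f_1 = ... = f_{k-1} = 0, f_k = a·e^{x_1}, and f_{n+k} = a·e^{x_1}·B_n(f_1,...,f_n) for n ≥ 1, where B_n is the complete Bell polynomial. Then f_{kn+j} = 0 for all n ≥ 0 and 1 ≤ j ≤ k-1. -/
/-- The partial (incomplete) exponential Bell polynomial `B_{n,k}(x_1, …, x_{n-k+1})`,
given by the explicit sum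
`∑ n!/(c_1!⋯c_{n-k+1}!) (x_1/1!)^{c_1} ⋯ (x_{n-k+1}/(n-k+1)!)^{c_{n-k+1}}`
over all `c_i ≥ 0` with `∑ i·c_i = n` and `∑ c_i = k`. -/
def partialBell {K : Type*} [Field K] (n k : ℕ) (x : ℕ → K) : K :=
  ∑ c ∈ (Fintype.piFinset fun _ : Fin (n - k + 1) => Finset.range (n + 1)).filter
      (fun c => (∑ i, (i.1 + 1) * c i) = n ∧ (∑ i, c i) = k),
    (Nat.factorial n : K) * ∏ i : Fin (n - k + 1),
      x (i.1 + 1) ^ c i /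
        ((Nat.factorial (c i) : K) * (Nat.factorial (i.1 + 1) : K) ^ c i)

/-- The complete exponential Bell polynomial `B_n(x_1, …, x_n)`, with `B_0 = 1`. -/
def completeBell {K : Type*} [Field K] (n : ℕ) (x : ℕ → K) : K :=
  if n = 0 then 1 else ∑ k ∈ Finset.Icc 1 n, partialBell n k x

lemma completeBell_vanish {K : Type*} [Field K] (k m : ℕ) (f : ℕ → K)
    (hkm : ¬ k ∣ m)
    (hf : ∀ i, ¬ k ∣ i → i ≤ m → f i = 0) :
    completeBell m f = 0 := by
  have hm : m ≠ 0 := by rintro rfl; exact hkm (dvd_zero k)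
  unfold completeBell
  rw [if_neg hm]
  apply Finset.sum_eq_zero
  intro k' hk'
  simp only [Finset.mem_Icc] at hk'
  unfold partialBell
  apply Finset.sum_eq_zero
  intro c hc
  simp only [Finset.mem_filter] at hc
  obtain ⟨-, hsum, -⟩ := hc
  by_cases hall : ∀ i : Fin (m - k' + 1), c i ≠ 0 → k ∣ (i.1 + 1)
  · exfalso
    apply hkm
    rw [← hsum]
    apply Finset.dvd_sum
    intro i _
    by_cases h : c i = 0
    · simp [h]
    · exact Dvd.dvd.mul_right (hall i h) _
  · push_neg at hall
    obtain ⟨i, hci, hki⟩ := hall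
    have hfz : f (i.1 + 1) = 0 := by
      apply hf _ hki
      have := i.2
      omega
    rw [Finset.prod_eq_zero (Finset.mem_univ i)]
    · ring
    · rw [hfz, zero_pow hci, zero_div]

open Complex in
/-- With initial data `(x₁, 0, …, 0)`, the autonomous functions vanish off multiples of `k`:
`f_{kn+j} = 0` for `1 ≤ j ≤ k-1`. -/
theorem autonomous_vanish (k : ℕ) (hk : 1 ≤ k) (a x₁ : ℂ) (f : ℕ → ℂ)
    (h0 : f 0 = x₁)
    (hinit : ∀ j, 1 ≤ j → j < k → f j = 0)
    (hfk : f k = a * exp x₁)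
    (hrec : ∀ n, 1 ≤ n → f (n + k) = a * exp x₁ * completeBell n f) :
    ∀ n j, 1 ≤ j → j ≤ k - 1 → f (k * n + j) = 0 := by
  have key : ∀ m, ¬ k ∣ m → f m = 0 := by
    intro m
    induction m using Nat.strong_induction_on with
    | _ m ih =>
      intro hkm
      have hm1 : 1 ≤ m := by
        rcases Nat.eq_zero_or_pos m with h | h
        · exact absurd (h ▸ dvd_zero k) hkm
        · exact h
      rcases lt_or_ge m k with h | h
      · exact hinit m hm1 h
      · have hmk : k < m := lt_of_le_of_ne h (by rintro rfl; exact hkm dvd_rfl)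
        have hn1 : 1 ≤ m - k := by omega
        have heq : m - k + k = m := by omega
        have := hrec (m - k) hn1
        rw [heq] at this
        rw [this]
        have hcb : completeBell (m - k) f = 0 := by
          apply completeBell_vanish k (m - k) f
          · intro hd
            have : k ∣ (m - k) + k := Dvd.dvd.add hd dvd_rfl
            rw [heq] at this
            exact hkm this
          · intro i hi hile
            exact ih i (by omega) hi
        rw [hcb, mul_zero]
  intro n j hj1 hjk
  apply key
  intro hd
  have h1 : k ∣ k * n := Dvd.intro n rfl
  have h2 : k ∣ j := (Nat.dvd_add_right h1).mp hd
  have := Nat.le_of_dvd (by omega) h2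
  omega
end

section
/- Fix k ≥ 1 and a ∈ ℂ, and x_1 ∈ ℂ. Define f_n recursively by f_0 = x_1, f_1 = ... = f_{k-1} = 0, f_k = a·e^{x_1}, and f_{n+k} = a·e^{x_1}·B_n(f_1,...,f_n). Define A_1 = a and A_{n+2} = ∑_{i=0}^{n} C(kn+k-1, ki+k-1)·A_{n-i+1}·A_{i+1} for n ≥ 0. Then f_{kn} = A_n · e^{n x_1} for all n ≥ 1. -/
open Finset

namespace BellAux

noncomputable def g (x : ℕ → ℂ) (j t : ℕ) : ℂ :=
  x (j + 1) ^ t / ((Nat.factorial t : ℂ) * (Nat.factorial (j + 1) : ℂ) ^ t)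

noncomputable def term (x : ℕ → ℂ) (m : ℕ) (c : ℕ → ℕ) : ℂ :=
  ∏ j ∈ Finset.range m, g x j (c j)

def wt (m : ℕ) (c : ℕ → ℕ) : ℕ := ∑ j ∈ Finset.range m, (j + 1) * c j
def sz (m : ℕ) (c : ℕ → ℕ) : ℕ := ∑ j ∈ Finset.range m, c j

def extF (n : ℕ) : (Fin n → ℕ) ↪ (ℕ → ℕ) :=
  ⟨fun c j => if h : j < n then c ⟨j, h⟩ else 0, by
    intro a b h
    funext i
    have := congrFun h i.1
    simpa [i.2] using this⟩

lemma extF_apply (n : ℕ) (c : Fin n → ℕ) (j : ℕ) :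
    extF n c j = if h : j < n then c ⟨j, h⟩ else 0 := rfl

def D (n b : ℕ) : Finset (ℕ → ℕ) := (Fintype.piFinset fun _ : Fin n => Finset.range b).map (extF n)

lemma mem_D {n b : ℕ} {c : ℕ → ℕ} :
    c ∈ D n b ↔ (∀ j, j < n → c j < b) ∧ (∀ j, n ≤ j → c j = 0) := by
  constructor
  · rintro hc
    simp only [D, mem_map] at hc
    obtain ⟨d, hd, rfl⟩ := hc
    simp only [Fintype.mem_piFinset, mem_range] at hd
    refine ⟨fun j hj => ?_, fun j hj => ?_⟩
    · simpa [extF_apply, hj] using hd ⟨j, hj⟩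
    · simp [extF_apply, Nat.not_lt.mpr hj]
  · rintro ⟨h1, h2⟩
    simp only [D, mem_map]
    refine ⟨fun i => c i.1, ?_, ?_⟩
    · simp only [Fintype.mem_piFinset, mem_range]; exact fun i => h1 i.1 i.2
    · funext j
      by_cases h : j < n
      · simp [extF_apply, h]
      · simp [extF_apply, h, h2 j (Nat.le_of_not_lt h)]

def Wt (w : ℕ) : Finset (ℕ → ℕ) := (D w (w + 1)).filter fun c => wt w c = w

noncomputable def cB (x : ℕ → ℂ) (w : ℕ) : ℂ := ∑ c ∈ Wt w, (Nat.factorial w : ℂ) * term x w c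

lemma g_zero (x : ℕ → ℂ) (j : ℕ) : g x j 0 = 1 := by simp [g]

lemma wt_eq_of {m w : ℕ} {c : ℕ → ℕ} (hw : w ≤ m) (hz : ∀ j, w ≤ j → c j = 0) :
    wt m c = wt w c := by
  unfold wt
  refine (Finset.sum_subset (Finset.range_subset_range.mpr hw) fun j _ hj => ?_).symm
  rw [hz j (Nat.le_of_not_lt (by simpa using hj))]
  simp

lemma sz_eq_of {m w : ℕ} {c : ℕ → ℕ} (hw : w ≤ m) (hz : ∀ j, w ≤ j → c j = 0) :
    sz m c = sz w c := by
  unfold sz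
  refine (Finset.sum_subset (Finset.range_subset_range.mpr hw) fun j _ hj => ?_).symm
  rw [hz j (Nat.le_of_not_lt (by simpa using hj))]

lemma term_eq_of (x : ℕ → ℂ) {m w : ℕ} {c : ℕ → ℕ} (hw : w ≤ m) (hz : ∀ j, w ≤ j → c j = 0) :
    term x m c = term x w c := by
  unfold term
  refine (Finset.prod_subset (Finset.range_subset_range.mpr hw) fun j _ hj => ?_).symm
  rw [hz j (Nat.le_of_not_lt (by simpa using hj)), g_zero]

lemma le_wt {m j : ℕ} {c : ℕ → ℕ} (hj : j < m) : (j + 1) * c j ≤ wt m c :=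
  Finset.single_le_sum (f := fun j => (j + 1) * c j) (fun _ _ => Nat.zero_le _)
    (Finset.mem_range.mpr hj)

lemma czero_of_wt {m w j : ℕ} {c : ℕ → ℕ} (hwt : wt m c = w) (hj : j < m) (hjw : w ≤ j) :
    c j = 0 := by
  by_contra h
  have h1 : 1 ≤ c j := Nat.one_le_iff_ne_zero.mpr h
  have := le_wt (c := c) hj
  nlinarith

lemma czero_of_sz {m n k j : ℕ} {c : ℕ → ℕ} (hwt : wt m c = n) (hsz : sz m c = k)
    (hk : 1 ≤ k) (hj : j < m) (hjw : n - k + 1 ≤ j) : c j = 0 := by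
  by_contra h
  have h1 : 1 ≤ c j := Nat.one_le_iff_ne_zero.mpr h
  have key : j * c j + sz m c ≤ wt m c := by
    unfold wt
    have hterm : ∀ i ∈ Finset.range m, i * c i + c i ≤ (i + 1) * c i := by
      intro i _; ring_nf; omega
    calc j * c j + sz m c ≤ (∑ i ∈ Finset.range m, i * c i) + sz m c := by
          gcongr
          exact Finset.single_le_sum (f := fun i => i * c i) (fun _ _ => Nat.zero_le _)
            (Finset.mem_range.mpr hj)
      _ = ∑ i ∈ Finset.range m, (i * c i + c i) := by rw [sz, ← Finset.sum_add_distrib]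
      _ ≤ _ := Finset.sum_le_sum hterm
  rw [hwt, hsz] at key
  have : j + k ≤ n := by nlinarith
  omega

lemma filter_D_eq {w m b : ℕ} (hm : w ≤ m) (hb : w < b) :
    (D m b).filter (fun c => wt m c = w) = Wt w := by
  ext c
  simp only [Wt, Finset.mem_filter, mem_D]
  constructor
  · rintro ⟨⟨hlt, hze⟩, hwt⟩
    have hz : ∀ j, w ≤ j → c j = 0 := fun j hj => by
      by_cases h : j < m
      · exact czero_of_wt hwt h hj
      · exact hze j (Nat.le_of_not_lt h)
    refine ⟨⟨fun j hj => ?_, fun j hj => hz j hj⟩, ?_⟩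
    · have h2 := le_wt (c := c) (Nat.lt_of_lt_of_le hj hm)
      rw [hwt] at h2
      have h3 : c j ≤ (j + 1) * c j := Nat.le_mul_of_pos_left _ (by omega)
      omega
    · rw [← wt_eq_of hm hz, hwt]
  · rintro ⟨⟨hlt, hze⟩, hwt⟩
    refine ⟨⟨fun j hj => ?_, fun j hj => ?_⟩, ?_⟩
    · by_cases h : j < w
      · exact Nat.lt_of_lt_of_le (hlt j h) hb
      · rw [hze j (Nat.le_of_not_lt h)]; omega
    · exact hze j (le_trans hm hj)
    · rw [wt_eq_of hm (fun j hj => hze j hj), hwt]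

lemma cB_eq_sum (x : ℕ → ℂ) {w m b : ℕ} (hm : w ≤ m) (hb : w < b) :
    cB x w = ∑ c ∈ (D m b).filter (fun c => wt m c = w), (Nat.factorial w : ℂ) * term x m c := by
  rw [filter_D_eq hm hb, cB]
  refine Finset.sum_congr rfl fun c hc => ?_
  simp only [Wt, Finset.mem_filter, mem_D] at hc
  rw [term_eq_of x hm fun j hj => hc.1.2 j hj]


lemma sz_le_wt {m : ℕ} {c : ℕ → ℕ} : sz m c ≤ wt m c := by
  refine Finset.sum_le_sum fun j _ => ?_
  exact Nat.le_mul_of_pos_left _ (by omega)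

lemma sz_pos {n : ℕ} {c : ℕ → ℕ} (hwt : wt n c = n) (hn : 1 ≤ n) : 1 ≤ sz n c := by
  by_contra h
  have hs : sz n c = 0 := by omega
  have hz : ∀ j ∈ Finset.range n, c j = 0 := by
    intro j hj
    exact (Finset.sum_eq_zero_iff.mp hs) j hj
  have : wt n c = 0 := Finset.sum_eq_zero fun j hj => by rw [hz j hj, Nat.mul_zero]
  omega

lemma wt_extF (m : ℕ) (d : Fin m → ℕ) :
    wt m (extF m d) = ∑ i : Fin m, (i.1 + 1) * d i := by
  rw [wt, ← Fin.sum_univ_eq_sum_range (fun j => (j + 1) * extF m d j) m]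
  exact Finset.sum_congr rfl fun i _ => by simp [extF_apply]

lemma sz_extF (m : ℕ) (d : Fin m → ℕ) :
    sz m (extF m d) = ∑ i : Fin m, d i := by
  rw [sz, ← Fin.sum_univ_eq_sum_range (fun j => extF m d j) m]
  exact Finset.sum_congr rfl fun i _ => by simp [extF_apply]

lemma term_extF (x : ℕ → ℂ) (m : ℕ) (d : Fin m → ℕ) :
    term x m (extF m d) =
      ∏ i : Fin m, x (i.1 + 1) ^ d i /
        ((Nat.factorial (d i) : ℂ) * (Nat.factorial (i.1 + 1) : ℂ) ^ d i) := by
  rw [term, ← Fin.prod_univ_eq_prod_range (fun j => g x j (extF m d j)) m]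
  exact Finset.prod_congr rfl fun i _ => by simp [extF_apply, g]

lemma partialBell_eq (n k : ℕ) (x : ℕ → ℂ) :
    partialBell n k x = ∑ c ∈ (D (n - k + 1) (n + 1)).filter
        (fun c => wt (n - k + 1) c = n ∧ sz (n - k + 1) c = k),
      (Nat.factorial n : ℂ) * term x (n - k + 1) c := by
  rw [partialBell, Finset.sum_filter, Finset.sum_filter, D, Finset.sum_map]
  refine Finset.sum_congr rfl fun d _ => ?_
  simp only [wt_extF, sz_extF, term_extF]

lemma Sk_eq {n k : ℕ} (hk : 1 ≤ k) (hkn : k ≤ n) :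
    (D (n - k + 1) (n + 1)).filter
        (fun c => wt (n - k + 1) c = n ∧ sz (n - k + 1) c = k)
      = (Wt n).filter (fun c => sz n c = k) := by
  have hmn : n - k + 1 ≤ n := by omega
  ext c
  simp only [Finset.mem_filter, Wt, mem_D]
  constructor
  · rintro ⟨⟨hlt, hze⟩, hwt, hsz⟩
    have hz : ∀ j, n - k + 1 ≤ j → c j = 0 := fun j hj => hze j hj
    have hwtn : wt n c = n := by rw [wt_eq_of hmn hz, hwt]
    have hszn : sz n c = k := by rw [sz_eq_of hmn hz, hsz]
    refine ⟨⟨⟨fun j hj => ?_, fun j hj => hz j (le_trans hmn hj)⟩, hwtn⟩, hszn⟩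
    have h2 := le_wt (c := c) hj
    rw [hwtn] at h2
    have h3 : c j ≤ (j + 1) * c j := Nat.le_mul_of_pos_left _ (by omega)
    omega
  · rintro ⟨⟨⟨hlt, hze⟩, hwt⟩, hsz⟩
    have hz : ∀ j, n - k + 1 ≤ j → c j = 0 := by
      intro j hj
      by_cases h : j < n
      · exact czero_of_sz hwt hsz hk h hj
      · exact hze j (Nat.le_of_not_lt h)
    refine ⟨⟨fun j hj => hlt j (lt_of_lt_of_le hj hmn), fun j hj => hz j hj⟩, ?_, ?_⟩
    · rw [← wt_eq_of hmn hz, hwt]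
    · rw [← sz_eq_of hmn hz, hsz]

lemma completeBell_eq (n : ℕ) (x : ℕ → ℂ) : completeBell n x = cB x n := by
  rcases Nat.eq_zero_or_pos n with rfl | hn
  · have hWt : Wt 0 = {fun _ => 0} := by
      ext c
      simp only [Wt, Finset.mem_filter, mem_D, Finset.mem_singleton]
      constructor
      · rintro ⟨⟨_, hz⟩, _⟩
        funext j; exact hz j (Nat.zero_le j)
      · rintro rfl
        exact ⟨⟨fun j hj => by omega, fun j _ => rfl⟩, by simp [wt]⟩
    simp [completeBell, cB, hWt, term]
  · rw [completeBell, if_neg (by omega), cB]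
    have hmaps : ∀ c ∈ Wt n, sz n c ∈ Finset.Icc 1 n := by
      intro c hc
      simp only [Wt, Finset.mem_filter, mem_D] at hc
      rw [Finset.mem_Icc]
      exact ⟨sz_pos hc.2 hn, le_trans sz_le_wt (le_of_eq hc.2)⟩
    rw [← Finset.sum_fiberwise_of_maps_to hmaps (fun c => (Nat.factorial n : ℂ) * term x n c)]
    refine Finset.sum_congr rfl fun k hk => ?_
    rw [Finset.mem_Icc] at hk
    rw [partialBell_eq, Sk_eq hk.1 hk.2]
    refine Finset.sum_congr rfl fun c hc => ?_
    simp only [Finset.mem_filter, Wt, mem_D] at hc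
    have hz : ∀ j, n - k + 1 ≤ j → c j = 0 := by
      intro j hj
      by_cases h : j < n
      · exact czero_of_sz hc.1.2 hc.2 hk.1 h hj
      · exact hc.1.1.2 j (Nat.le_of_not_lt h)
    rw [term_eq_of x (show n - k + 1 ≤ n by omega) hz]

lemma wt_add {m i : ℕ} (c : ℕ → ℕ) (him : i < m) :
    wt m (fun j => if j = i then c j + 1 else c j) = wt m c + (i + 1) := by
  have hmem := Finset.mem_range.mpr him
  unfold wt
  rw [← Finset.add_sum_erase _ _ hmem, ← Finset.add_sum_erase _ (fun j => (j + 1) * c j) hmem]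
  have hcongr : ∀ j ∈ (Finset.range m).erase i,
      (j + 1) * (if j = i then c j + 1 else c j) = (j + 1) * c j := fun j hj => by
    rw [if_neg (Finset.ne_of_mem_erase hj)]
  rw [Finset.sum_congr rfl hcongr]
  have hii : (fun j => if j = i then c j + 1 else c j) i = c i + 1 := by simp
  rw [hii]
  ring

lemma key_scalar (x : ℕ → ℂ) {n i : ℕ} (t : ℕ) (hi : i ≤ n) :
    (n.choose i : ℂ) * x (i + 1) * ((Nat.factorial (n - i) : ℂ) * g x i t) =
      (((i + 1) * (t + 1) : ℕ) : ℂ) * ((Nat.factorial n : ℂ) * g x i (t + 1)) := by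
  have hfac : ((n.choose i : ℕ) : ℂ) * (Nat.factorial i : ℂ) * (Nat.factorial (n - i) : ℂ)
      = (Nat.factorial n : ℂ) := by
    exact_mod_cast congrArg (fun z : ℕ => (z : ℂ)) (Nat.choose_mul_factorial_mul_factorial hi)
  have h1 : (Nat.factorial t : ℂ) ≠ 0 := Nat.cast_ne_zero.mpr (Nat.factorial_ne_zero t)
  have h2 : (Nat.factorial (i + 1) : ℂ) ≠ 0 := Nat.cast_ne_zero.mpr (Nat.factorial_ne_zero _)
  have h4 : ((Nat.factorial (i + 1) : ℂ)) ^ t ≠ 0 := pow_ne_zero _ h2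
  have ht1 : ((t : ℂ) + 1) ≠ 0 := by
    exact_mod_cast Nat.cast_add_one_ne_zero (R := ℂ) t
  have hfi : ((Nat.factorial i : ℂ)) ≠ 0 := Nat.cast_ne_zero.mpr (Nat.factorial_ne_zero _)
  have hi1 : ((i : ℂ) + 1) ≠ 0 := by
    exact_mod_cast Nat.cast_add_one_ne_zero (R := ℂ) i
  have hg : g x i (t + 1) = x (i + 1) * g x i t / (((t : ℂ) + 1) * (Nat.factorial (i + 1) : ℂ)) := by
    unfold g
    rw [Nat.factorial_succ t, pow_succ]
    push_cast
    field_simp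
    ring
  have hfs : ((Nat.factorial (i + 1) : ℕ) : ℂ) = ((i : ℂ) + 1) * (Nat.factorial i : ℂ) := by
    rw [Nat.factorial_succ]
    push_cast
    ring
  have hg' : x (i + 1) * g x i t
      = g x i (t + 1) * (((t : ℂ) + 1) * ((Nat.factorial (i + 1) : ℂ))) := by
    rw [hg]
    field_simp
  push_cast
  linear_combination ((Nat.factorial (n - i) : ℂ) * ((n.choose i : ℕ) : ℂ)) * hg'
    + (((t : ℂ) + 1) * g x i (t + 1) * ((n.choose i : ℕ) : ℂ) * (Nat.factorial (n - i) : ℂ)) * hfs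
    + (((t : ℂ) + 1) * g x i (t + 1) * ((i : ℂ) + 1)) * hfac

lemma inner_sum (x : ℕ → ℂ) {n i : ℕ} (hi : i ≤ n) :
    ∑ c ∈ (D (n + 1) (n + 2)).filter (fun c => wt (n + 1) c = n + 1),
        (((i + 1) * c i : ℕ) : ℂ) * ((Nat.factorial n : ℂ) * term x (n + 1) c)
      = (n.choose i : ℂ) * x (i + 1) * cB x (n - i) := by
  have him : i < n + 1 := by omega
  rw [cB_eq_sum x (show n - i ≤ n + 1 by omega) (show n - i < n + 2 by omega), Finset.mul_sum]
  rw [← Finset.sum_filter_of_ne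
    (p := fun c => c i ≠ 0)
    (f := fun c => (((i + 1) * c i : ℕ) : ℂ) * ((Nat.factorial n : ℂ) * term x (n + 1) c))
    (fun c _ hne => fun h0 => hne (by simp [h0]))]
  refine (Finset.sum_nbij' (i := fun c j => if j = i then c j + 1 else c j)
    (j := fun c j => if j = i then c j - 1 else c j) ?_ ?_ ?_ ?_ ?_).symm
  · -- forward membership : c' in S(n-i) → psi c' in T
    intro c hc
    simp only [Finset.mem_filter, mem_D] at hc ⊢
    obtain ⟨⟨hlt, hze⟩, hwt⟩ := hc
    refine ⟨⟨⟨fun j hj => ?_, fun j hj => ?_⟩, ?_⟩, ?_⟩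
    · by_cases h : j = i
      · rw [if_pos h]
        have h2 := le_wt (c := c) hj
        rw [hwt] at h2
        have h3 : c j ≤ (j + 1) * c j := Nat.le_mul_of_pos_left _ (by omega)
        omega
      · rw [if_neg h]; exact hlt j hj
    · have : ¬ (j = i) := by omega
      rw [if_neg this]; exact hze j hj
    · rw [wt_add c him, hwt]; omega
    · simp
  · -- backward membership
    intro c hc
    simp only [Finset.mem_filter, mem_D] at hc ⊢
    obtain ⟨⟨⟨hlt, hze⟩, hwt⟩, hne⟩ := hc
    refine ⟨⟨fun j hj => ?_, fun j hj => ?_⟩, ?_⟩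
    · by_cases h : j = i
      · rw [if_pos h]; exact lt_of_le_of_lt (Nat.sub_le _ _) (hlt j hj)
      · rw [if_neg h]; exact hlt j hj
    · have : ¬ (j = i) := by omega
      rw [if_neg this]; exact hze j hj
    · have hrec : (fun j => if j = i then (if j = i then c j - 1 else c j) + 1
          else (if j = i then c j - 1 else c j)) = c := by
        funext j
        by_cases h : j = i
        · simp only [if_pos h]
          have : 1 ≤ c j := by subst h; omega
          omega
        · simp only [if_neg h]
      have := wt_add (m := n + 1) (fun j => if j = i then c j - 1 else c j) him
      rw [hrec, hwt] at this
      omega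
  · -- left inverse
    intro c _
    funext j
    by_cases h : j = i
    · simp [h]
    · simp [h]
  · -- right inverse
    intro c hc
    simp only [Finset.mem_filter] at hc
    have h1 : 1 ≤ c i := Nat.one_le_iff_ne_zero.mpr hc.2
    funext j
    by_cases h : j = i
    · simp only [if_pos h]
      have h2 : 1 ≤ c j := h ▸ h1
      omega
    · simp only [if_neg h]
  · -- pointwise values
    intro c hc
    simp only [Finset.mem_filter, mem_D] at hc
    obtain ⟨⟨hlt, hze⟩, hwt⟩ := hc
    have hmem := Finset.mem_range.mpr him
    have hterm1 : term x (n + 1) (fun j => if j = i then c j + 1 else c j)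
        = g x i (c i + 1) * ∏ j ∈ (Finset.range (n + 1)).erase i, g x j (c j) := by
      rw [term, ← Finset.mul_prod_erase _ _ hmem, if_pos rfl]
      congr 1
      refine Finset.prod_congr rfl fun j hj => ?_
      rw [if_neg (Finset.ne_of_mem_erase hj)]
    have hterm2 : term x (n + 1) c
        = g x i (c i) * ∏ j ∈ (Finset.range (n + 1)).erase i, g x j (c j) := by
      rw [term, ← Finset.mul_prod_erase _ _ hmem]
    rw [hterm1, hterm2]
    have hbeta : ((fun j => if j = i then c j + 1 else c j) i) = c i + 1 := by simp
    rw [hbeta]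
    have := key_scalar x (c i) hi
    calc (n.choose i : ℂ) * x (i + 1) * ((Nat.factorial (n - i) : ℂ)
          * (g x i (c i) * ∏ j ∈ (Finset.range (n + 1)).erase i, g x j (c j)))
        = ((n.choose i : ℂ) * x (i + 1) * ((Nat.factorial (n - i) : ℂ) * g x i (c i)))
          * ∏ j ∈ (Finset.range (n + 1)).erase i, g x j (c j) := by ring
      _ = ((((i + 1) * (c i + 1) : ℕ) : ℂ) * ((Nat.factorial n : ℂ) * g x i (c i + 1)))
          * ∏ j ∈ (Finset.range (n + 1)).erase i, g x j (c j) := by rw [this]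
      _ = _ := by ring

lemma cB_rec (x : ℕ → ℂ) (n : ℕ) :
    cB x (n + 1) = ∑ i ∈ Finset.range (n + 1), (n.choose i : ℂ) * x (i + 1) * cB x (n - i) := by
  rw [cB_eq_sum x (le_refl (n + 1)) (by omega : n + 1 < n + 2)]
  have expand : ∀ c ∈ (D (n + 1) (n + 2)).filter (fun c => wt (n + 1) c = n + 1),
      (Nat.factorial (n + 1) : ℂ) * term x (n + 1) c
        = ∑ i ∈ Finset.range (n + 1),
            (((i + 1) * c i : ℕ) : ℂ) * ((Nat.factorial n : ℂ) * term x (n + 1) c) := by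
    intro c hc
    have hwt : wt (n + 1) c = n + 1 := (Finset.mem_filter.mp hc).2
    rw [← Finset.sum_mul]
    have hsum : (∑ i ∈ Finset.range (n + 1), (((i + 1) * c i : ℕ) : ℂ)) = ((n + 1 : ℕ) : ℂ) := by
      rw [← Nat.cast_sum]
      exact_mod_cast congrArg (fun z : ℕ => (z : ℂ)) hwt
    rw [hsum, Nat.factorial_succ]
    push_cast
    ring
  rw [Finset.sum_congr rfl expand, Finset.sum_comm]
  exact Finset.sum_congr rfl fun i hi => inner_sum x (by simpa using Nat.lt_succ_iff.mp (Finset.mem_range.mp hi))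

lemma completeBell_rec (x : ℕ → ℂ) (n : ℕ) :
    completeBell (n + 1) x =
      ∑ i ∈ Finset.range (n + 1), (n.choose i : ℂ) * x (i + 1) * completeBell (n - i) x := by
  rw [completeBell_eq, cB_rec]
  exact Finset.sum_congr rfl fun i _ => by rw [completeBell_eq]

end BellAux

open Complex in
/-- With initial data `(x₁, 0, …, 0)`, `f_{kn} = Aₙ·e^{n x₁}` where `A₁ = a` and
`A_{n+2} = ∑_{i=0}^{n} C(kn+k-1, ki+k-1)·A_{n-i+1}·A_{i+1}`. -/
theorem autonomous_at_multiples (k : ℕ) (hk : 1 ≤ k) (a x₁ : ℂ) (f : ℕ → ℂ) (A : ℕ → ℂ)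
    (h0 : f 0 = x₁)
    (hinit : ∀ j, 1 ≤ j → j < k → f j = 0)
    (hfk : f k = a * exp x₁)
    (hrec : ∀ n, 1 ≤ n → f (n + k) = a * exp x₁ * completeBell n f)
    (hA1 : A 1 = a)
    (hArec : ∀ n, A (n + 2) =
      ∑ i ∈ Finset.range (n + 1),
        (Nat.choose (k * n + k - 1) (k * i + k - 1) : ℂ) * A (n - i + 1) * A (i + 1)) :
    ∀ n, 1 ≤ n → f (k * n) = A n * exp (n * x₁) := by
  have hG0 : completeBell 0 f = 1 := by simp [completeBell]
  -- vanishing of Bell values off multiples of k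
  have Z : ∀ m, ¬ (k ∣ m) → completeBell m f = 0 := by
    intro m
    induction m using Nat.strong_induction_on with
    | _ m IH =>
      intro hm
      rcases m with _ | m
      · exact absurd (dvd_zero k) hm
      · rw [BellAux.completeBell_rec f m]
        apply Finset.sum_eq_zero
        intro i hi
        rw [Finset.mem_range] at hi
        by_cases hd : k ∣ (i + 1)
        · have hnd : ¬ k ∣ (m - i) := by
            intro h
            apply hm
            have he : m + 1 = (i + 1) + (m - i) := by omega
            rw [he]
            exact dvd_add hd h
          rw [IH (m - i) (by omega) hnd, mul_zero]
        · have hf : f (i + 1) = 0 := by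
            rcases lt_trichotomy (i + 1) k with h | h | h
            · exact hinit (i + 1) (by omega) h
            · exact absurd (h ▸ dvd_refl k) hd
            · have h1 : 1 ≤ i + 1 - k := by omega
              have h2 : i + 1 - k + k = i + 1 := by omega
              have h3 : ¬ k ∣ (i + 1 - k) := by
                intro hh
                apply hd
                have he : i + 1 = (i + 1 - k) + k := by omega
                rw [he]
                exact dvd_add hh dvd_rfl
              rw [← h2, hrec _ h1, IH (i + 1 - k) (by omega) h3, mul_zero]
          rw [hf, mul_zero, zero_mul]
  have fz : ∀ j, 1 ≤ j → ¬ k ∣ j → f j = 0 := by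
    intro j hj1 hjd
    rcases lt_trichotomy j k with h | h | h
    · exact hinit j hj1 h
    · exact absurd (h ▸ dvd_refl k) hjd
    · have h1 : 1 ≤ j - k := by omega
      have h2 : j - k + k = j := by omega
      have h3 : ¬ k ∣ (j - k) := by
        intro hh
        apply hjd
        have he : j = (j - k) + k := by omega
        rw [he]
        exact dvd_add hh dvd_rfl
      rw [← h2, hrec _ h1, Z (j - k) h3, mul_zero]
  -- the step relation at multiples
  have hfC : ∀ m : ℕ, f (k * (m + 1)) = a * Complex.exp x₁ * completeBell (k * m) f := by
    intro m
    rcases Nat.eq_zero_or_pos m with rfl | hm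
    · simp only [Nat.zero_add, Nat.mul_one, Nat.mul_zero, hG0, mul_one]
      exact hfk
    · rw [Nat.mul_succ]
      exact hrec (k * m) (Nat.one_le_iff_ne_zero.mpr (Nat.mul_ne_zero (by omega) (by omega)))
  -- the Bell recurrence restricted to multiples of k
  have hmulrec : ∀ m : ℕ, completeBell (k * (m + 1)) f
      = ∑ j ∈ Finset.range (m + 1),
          (((k * m + k - 1).choose (k * j + k - 1) : ℕ) : ℂ) * f (k * (j + 1))
            * completeBell (k * (m - j)) f := by
    intro m
    have hK1 : k * (m + 1) = (k * m + k - 1) + 1 := by rw [Nat.mul_succ]; omega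
    rw [hK1, BellAux.completeBell_rec f (k * m + k - 1)]
    have hfilter :
        ∑ i ∈ (Finset.range (k * m + k - 1 + 1)).filter (fun i => k ∣ (i + 1)),
            (((k * m + k - 1).choose i : ℕ) : ℂ) * f (i + 1) * completeBell (k * m + k - 1 - i) f
          = ∑ i ∈ Finset.range (k * m + k - 1 + 1),
            (((k * m + k - 1).choose i : ℕ) : ℂ) * f (i + 1) * completeBell (k * m + k - 1 - i) f := by
      refine Finset.sum_filter_of_ne fun i _ hne => ?_
      by_contra hd
      exact hne (by rw [fz (i + 1) (by omega) hd, mul_zero, zero_mul])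
    rw [← hfilter]
    refine (Finset.sum_nbij' (i := fun j => k * j + k - 1) (j := fun i => (i + 1) / k - 1)
      ?_ ?_ ?_ ?_ ?_).symm
    · intro j hj
      beta_reduce
      rw [Finset.mem_range] at hj
      have hle : k * j ≤ k * m := Nat.mul_le_mul_left k (by omega)
      rw [Finset.mem_filter, Finset.mem_range]
      refine ⟨by omega, ?_⟩
      have he : (k * j + k - 1) + 1 = k * (j + 1) := by rw [Nat.mul_succ]; omega
      rw [he]
      exact dvd_mul_right k (j + 1)
    · intro i hi
      beta_reduce
      rw [Finset.mem_filter, Finset.mem_range] at hi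
      obtain ⟨hir, t, ht⟩ := hi
      have ht1 : 1 ≤ t := Nat.one_le_iff_ne_zero.mpr (fun h0 => by
        rw [h0, Nat.mul_zero] at ht; omega)
      have hdiv : (i + 1) / k = t := by rw [ht]; exact Nat.mul_div_cancel_left t (by omega)
      rw [Finset.mem_range, hdiv]
      have htm : k * t ≤ k * (m + 1) := by rw [Nat.mul_succ]; omega
      have := Nat.le_of_mul_le_mul_left htm (show 0 < k by omega)
      omega
    · intro j _
      beta_reduce
      have he : k * j + k - 1 + 1 = k * (j + 1) := by rw [Nat.mul_succ]; omega
      rw [he, Nat.mul_div_cancel_left _ (show 0 < k by omega)]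
      omega
    · intro i hi
      beta_reduce
      rw [Finset.mem_filter, Finset.mem_range] at hi
      obtain ⟨hir, t, ht⟩ := hi
      have ht1 : 1 ≤ t := Nat.one_le_iff_ne_zero.mpr (fun h0 => by
        rw [h0, Nat.mul_zero] at ht; omega)
      have hdiv : (i + 1) / k = t := by rw [ht]; exact Nat.mul_div_cancel_left t (by omega)
      rw [hdiv]
      obtain ⟨s, rfl⟩ : ∃ s, t = s + 1 := ⟨t - 1, by omega⟩
      rw [Nat.mul_succ] at ht
      simp only [Nat.add_sub_cancel]
      omega
    · intro j hj
      beta_reduce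
      rw [Finset.mem_range] at hj
      have e1 : (k * j + k - 1) + 1 = k * (j + 1) := by rw [Nat.mul_succ]; omega
      have e2 : k * m + k - 1 - (k * j + k - 1) = k * (m - j) := by
        obtain ⟨d, rfl⟩ : ∃ d, m = j + d := ⟨m - j, by omega⟩
        have h3 : k * (j + d) = k * j + k * d := Nat.mul_add k j d
        have h4 : j + d - j = d := by omega
        rw [h4, h3]
        omega
      rw [e1, e2]
  -- main induction
  have key : ∀ m : ℕ, a * completeBell (k * m) f = A (m + 1) * Complex.exp ((m : ℂ) * x₁) := by
    intro m
    induction m using Nat.strong_induction_on with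
    | _ m IH =>
      rcases m with _ | m
      · rw [Nat.mul_zero, hG0, hA1]
        simp
      · rw [hmulrec m, Finset.mul_sum, hArec m, Finset.sum_mul]
        refine Finset.sum_congr rfl fun j hj => ?_
        rw [Finset.mem_range] at hj
        have hj' : j ≤ m := by omega
        have h1 : f (k * (j + 1)) = A (j + 1) * Complex.exp (((j : ℂ) + 1) * x₁) := by
          rw [hfC j]
          calc a * Complex.exp x₁ * completeBell (k * j) f
              = (a * completeBell (k * j) f) * Complex.exp x₁ := by ring
            _ = A (j + 1) * Complex.exp ((j : ℂ) * x₁) * Complex.exp x₁ := by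
                rw [IH j (by omega)]
            _ = A (j + 1) * Complex.exp (((j : ℂ) + 1) * x₁) := by
                rw [mul_assoc, ← Complex.exp_add]
                have h4 : (j : ℂ) * x₁ + x₁ = ((j : ℂ) + 1) * x₁ := by ring
                rw [h4]
        have h2 : a * completeBell (k * (m - j)) f
            = A (m - j + 1) * Complex.exp ((((m - j : ℕ)) : ℂ) * x₁) := IH (m - j) (by omega)
        calc a * ((((k * m + k - 1).choose (k * j + k - 1) : ℕ) : ℂ) * f (k * (j + 1))
                * completeBell (k * (m - j)) f)
            = (((k * m + k - 1).choose (k * j + k - 1) : ℕ) : ℂ) * f (k * (j + 1))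
                * (a * completeBell (k * (m - j)) f) := by ring
          _ = (((k * m + k - 1).choose (k * j + k - 1) : ℕ) : ℂ)
                * (A (j + 1) * Complex.exp (((j : ℂ) + 1) * x₁))
                * (A (m - j + 1) * Complex.exp ((((m - j : ℕ)) : ℂ) * x₁)) := by rw [h1, h2]
          _ = (((k * m + k - 1).choose (k * j + k - 1) : ℕ) : ℂ) * A (m - j + 1) * A (j + 1)
                * (Complex.exp (((j : ℂ) + 1) * x₁) * Complex.exp ((((m - j : ℕ)) : ℂ) * x₁)) := by
              ring
          _ = _ := by
              rw [← Complex.exp_add]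
              have h4 : ((j : ℂ) + 1) * x₁ + (((m - j : ℕ)) : ℂ) * x₁ = ((m + 1 : ℕ) : ℂ) * x₁ := by
                push_cast [Nat.cast_sub hj']
                ring
              rw [h4]
  intro n hn
  obtain ⟨m, rfl⟩ : ∃ m, n = m + 1 := ⟨n - 1, by omega⟩
  rw [hfC m]
  calc a * Complex.exp x₁ * completeBell (k * m) f
      = (a * completeBell (k * m) f) * Complex.exp x₁ := by ring
    _ = A (m + 1) * Complex.exp ((m : ℂ) * x₁) * Complex.exp x₁ := by rw [key m]
    _ = A (m + 1) * Complex.exp (((m + 1 : ℕ) : ℂ) * x₁) := by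
        rw [mul_assoc, ← Complex.exp_add]
        have h4 : (m : ℂ) * x₁ + x₁ = ((m + 1 : ℕ) : ℂ) * x₁ := by push_cast; ring
        rw [h4]
end

section
/- Fix k ≥ 1, a ∈ ℂ, c ∈ ℂ with c ≠ 0, and a choice of logarithm ln c. Let f_n(x_1,...,x_k; a) be the complete exponential autonomous functions of order k: f_{j-1} = x_j for 1 ≤ j ≤ k, f_k = a·e^{x_1}, f_{n+k} = a·e^{x_1}·B_n(f_1,...,f_n). Then for all n ≥ 1, f_n(x_1 + k·ln c, c·x_2, c^2·x_3, ..., c^{k-1}·x_k; a) = c^n · f_n(x_1, x_2, ..., x_k; a). -/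
lemma partialBell_homog (n k : ℕ) (c : ℂ) (x y : ℕ → ℂ)
    (h : ∀ i, 1 ≤ i → i ≤ n - k + 1 → y i = c ^ i * x i) :
    partialBell n k y = c ^ n * partialBell n k x := by
  unfold partialBell
  rw [Finset.mul_sum]
  refine Finset.sum_congr rfl fun d hd => ?_
  simp only [Finset.mem_filter] at hd
  obtain ⟨-, hsum, -⟩ := hd
  have key : ∀ i : Fin (n - k + 1),
      y (i.1 + 1) ^ d i / ((Nat.factorial (d i) : ℂ) * (Nat.factorial (i.1 + 1) : ℂ) ^ d i)
        = c ^ ((i.1 + 1) * d i) *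
          (x (i.1 + 1) ^ d i / ((Nat.factorial (d i) : ℂ) * (Nat.factorial (i.1 + 1) : ℂ) ^ d i)) := by
    intro i
    rw [h (i.1 + 1) (by omega) (by omega), mul_pow, pow_mul]
    ring
  rw [Finset.prod_congr rfl (fun i _ => key i), Finset.prod_mul_distrib,
    Finset.prod_pow_eq_pow_sum, hsum]
  ring

lemma completeBell_homog (n : ℕ) (hn : 1 ≤ n) (c : ℂ) (x y : ℕ → ℂ)
    (h : ∀ i, 1 ≤ i → i ≤ n → y i = c ^ i * x i) :
    completeBell n y = c ^ n * completeBell n x := by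
  unfold completeBell
  rw [if_neg (by omega), if_neg (by omega), Finset.mul_sum]
  refine Finset.sum_congr rfl fun j hj => ?_
  simp only [Finset.mem_Icc] at hj
  exact partialBell_homog n j c x y fun i h1 h2 => h i h1 (by omega)

open Complex in
/-- Scaling identity: if `g` is the autonomous sequence of order `k` for initial data
`(x₁ + k·ln c, c·x₂, …, c^{k-1}·x_k)` and `f` the one for `(x₁, …, x_k)`, then
`gₙ = cⁿ·fₙ` for all `n ≥ 1`.  Here `l` is a choice of logarithm of `c`, i.e. `exp l = c`. -/
theorem autonomous_scale_initial (k : ℕ) (hk : 1 ≤ k) (a c l : ℂ) (hc : c ≠ 0)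
    (hl : exp l = c) (x : ℕ → ℂ) (f g : ℕ → ℂ)
    (hfinit : ∀ j, 1 ≤ j → j ≤ k → f (j - 1) = x j)
    (hfk : f k = a * exp (x 1))
    (hfrec : ∀ n, 1 ≤ n → f (n + k) = a * exp (x 1) * completeBell n f)
    (hg0 : g 0 = x 1 + k * l)
    (hginit : ∀ j, 2 ≤ j → j ≤ k → g (j - 1) = c ^ (j - 1) * x j)
    (hgk : g k = a * exp (x 1 + k * l))
    (hgrec : ∀ n, 1 ≤ n → g (n + k) = a * exp (x 1 + k * l) * completeBell n g) :
    ∀ n, 1 ≤ n → g n = c ^ n * f n := by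
  have hkl : exp ((k : ℂ) * l) = c ^ k := by
    rw [← hl, ← Complex.exp_nat_mul]
  intro n
  induction n using Nat.strong_induction_on with
  | _ n ih =>
    intro hn
    rcases lt_trichotomy n k with h | h | h
    · have h2 := hginit (n + 1) (by omega) (by omega)
      have h1 := hfinit (n + 1) (by omega) (by omega)
      simp only [Nat.add_sub_cancel] at h1 h2
      rw [h1, h2]
    · subst h
      rw [hgk, hfk, Complex.exp_add, hkl]
      ring
    · have hm : n = (n - k) + k := by omega
      rw [hm, hgrec (n - k) (by omega), hfrec (n - k) (by omega),
        completeBell_homog (n - k) (by omega) c f g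
          (fun i h1 h2 => ih i (by omega) h1),
        Complex.exp_add, hkl, pow_add]
      ring
end

section
/- Fix k ≥ 1 and a ∈ ℂ. Let f_n(x_1,...,x_{2k}; a) be the complete exponential autonomous functions of order 2k: f_{j-1} = x_j for 1 ≤ j ≤ 2k, f_{2k} = a·e^{x_1}, f_{n+2k} = a·e^{x_1}·B_n(f_1,...,f_n). Then for all n ≥ 0, f_n(x_1, -x_2, x_3, -x_4, ..., x_{2k-1}, -x_{2k}; a) = (-1)^n · f_n(x_1, x_2, ..., x_{2k}; a). -/
lemma partialBell_alt {n k : ℕ} (hk : 1 ≤ k) (hkn : k ≤ n) (x y : ℕ → ℂ)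
    (h : ∀ j, 1 ≤ j → j ≤ n → y j = (-1 : ℂ) ^ j * x j) :
    partialBell n k y = (-1 : ℂ) ^ n * partialBell n k x := by
  unfold partialBell
  rw [Finset.mul_sum]
  apply Finset.sum_congr rfl
  intro c hc
  simp only [Finset.mem_filter] at hc
  obtain ⟨hc1, hn, hkk⟩ := hc
  have hterm : ∀ i : Fin (n - k + 1),
      y (i.1 + 1) ^ c i / ((Nat.factorial (c i) : ℂ) * (Nat.factorial (i.1 + 1) : ℂ) ^ c i)
      = (-1 : ℂ) ^ ((i.1 + 1) * c i) *
        (x (i.1 + 1) ^ c i / ((Nat.factorial (c i) : ℂ) * (Nat.factorial (i.1 + 1) : ℂ) ^ c i)) := by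
    intro i
    have hi : i.1 + 1 ≤ n := by have := i.2; omega
    rw [h (i.1 + 1) (by omega) hi, mul_pow, ← pow_mul]
    ring
  rw [Finset.prod_congr rfl (fun i _ => hterm i), Finset.prod_mul_distrib,
    Finset.prod_pow_eq_pow_sum, hn]
  ring

lemma completeBell_alt {n : ℕ} (hn : 1 ≤ n) (x y : ℕ → ℂ)
    (h : ∀ j, 1 ≤ j → j ≤ n → y j = (-1 : ℂ) ^ j * x j) :
    completeBell n y = (-1 : ℂ) ^ n * completeBell n x := by
  unfold completeBell
  rw [if_neg (by omega), if_neg (by omega), Finset.mul_sum]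
  apply Finset.sum_congr rfl
  intro k hkm
  simp only [Finset.mem_Icc] at hkm
  exact partialBell_alt hkm.1 hkm.2 x y h

open Complex in
/-- Alternating-sign identity for autonomous functions of even order `2k`: if `g` is the
autonomous sequence for initial data `(x₁, -x₂, x₃, -x₄, …, x_{2k-1}, -x_{2k})` and `f`
the one for `(x₁, …, x_{2k})`, then `gₙ = (-1)ⁿ·fₙ` for all `n ≥ 0`. -/
theorem autonomous_alt_sign (k : ℕ) (hk : 1 ≤ k) (a : ℂ) (x : ℕ → ℂ) (f g : ℕ → ℂ)
    (hfinit : ∀ j, 1 ≤ j → j ≤ 2 * k → f (j - 1) = x j)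
    (hfk : f (2 * k) = a * exp (x 1))
    (hfrec : ∀ n, 1 ≤ n → f (n + 2 * k) = a * exp (x 1) * completeBell n f)
    (hginit : ∀ j, 1 ≤ j → j ≤ 2 * k → g (j - 1) = (-1 : ℂ) ^ (j - 1) * x j)
    (hgk : g (2 * k) = a * exp (x 1))
    (hgrec : ∀ n, 1 ≤ n → g (n + 2 * k) = a * exp (x 1) * completeBell n g) :
    ∀ n, g n = (-1 : ℂ) ^ n * f n := by
  intro n
  induction n using Nat.strong_induction_on with
  | _ n ih =>
    rcases lt_trichotomy n (2 * k) with hlt | heq | hgt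
    · have h1 : (1 : ℕ) ≤ n + 1 := by omega
      have h2 : n + 1 ≤ 2 * k := by omega
      have := hginit (n + 1) h1 h2
      have hf := hfinit (n + 1) h1 h2
      simp only [Nat.add_sub_cancel] at this hf
      rw [this, hf]
    · subst heq
      rw [hgk, hfk, pow_mul]
      simp
    · obtain ⟨m, hm, rfl⟩ : ∃ m, 1 ≤ m ∧ n = m + 2 * k := ⟨n - 2 * k, by omega, by omega⟩
      rw [hgrec m hm, hfrec m hm,
        completeBell_alt hm f g (fun j hj1 hj2 => ih j (by omega)),
        pow_add, pow_mul]
      simp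
      ring
end

section
/- Let A_n be the Euler zigzag numbers, defined by sec(t) + tan(t) = ∑_{n≥0} A_n t^n/n!. Then A_{n+1} = B_n(A_0, A_1, ..., A_{n-1}) for all n ≥ 1, where B_n is the complete exponential Bell polynomial. -/
open Finset

/-- the weight of one coordinate -/
noncomputable def bwt (x : ℕ → ℝ) (j k : ℕ) : ℝ :=
  x (j + 1) ^ k / ((Nat.factorial k : ℝ) * (Nat.factorial (j + 1) : ℝ) ^ k)

lemma bwt_zero (x : ℕ → ℝ) (j : ℕ) : bwt x j 0 = 1 := by
  simp [bwt]

noncomputable def bellW (N m : ℕ) (x : ℕ → ℝ) : ℝ :=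
  ∑ c ∈ (Fintype.piFinset fun _ : Fin N => Finset.range (m + 1)).filter
      (fun c => (∑ i, (i.1 + 1) * c i) = m),
    ∏ i : Fin N, bwt x i.1 (c i)

noncomputable def bellWk (N m k : ℕ) (x : ℕ → ℝ) : ℝ :=
  ∑ c ∈ (Fintype.piFinset fun _ : Fin N => Finset.range (m + 1)).filter
      (fun c => (∑ i, (i.1 + 1) * c i) = m ∧ (∑ i, c i) = k),
    ∏ i : Fin N, bwt x i.1 (c i)

lemma mem_bellSet_iff {N m : ℕ} (c : Fin N → ℕ) :
    c ∈ (Fintype.piFinset fun _ : Fin N => Finset.range (m + 1)).filter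
      (fun c => (∑ i, (i.1 + 1) * c i) = m) ↔ (∑ i, (i.1 + 1) * c i) = m := by
  constructor
  · exact fun h => (mem_filter.mp h).2
  · intro h
    refine mem_filter.mpr ⟨Fintype.mem_piFinset.mpr fun i => ?_, h⟩
    rw [mem_range, Nat.lt_succ_iff, ← h]
    calc c i ≤ (i.1 + 1) * c i := Nat.le_mul_of_pos_left _ (Nat.succ_pos _)
    _ ≤ ∑ j, (j.1 + 1) * c j := Finset.single_le_sum (f := fun j : Fin N => (j.1 + 1) * c j) (fun j _ => Nat.zero_le _) (mem_univ i)

lemma mem_bellSetk_iff {N m k : ℕ} (c : Fin N → ℕ) :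
    c ∈ (Fintype.piFinset fun _ : Fin N => Finset.range (m + 1)).filter
      (fun c => (∑ i, (i.1 + 1) * c i) = m ∧ (∑ i, c i) = k) ↔
      ((∑ i, (i.1 + 1) * c i) = m ∧ (∑ i, c i) = k) := by
  constructor
  · exact fun h => (mem_filter.mp h).2
  · intro h
    refine mem_filter.mpr ⟨Fintype.mem_piFinset.mpr fun i => ?_, h⟩
    rw [mem_range, Nat.lt_succ_iff, ← h.1]
    calc c i ≤ (i.1 + 1) * c i := Nat.le_mul_of_pos_left _ (Nat.succ_pos _)
    _ ≤ ∑ j, (j.1 + 1) * c j := Finset.single_le_sum (f := fun j : Fin N => (j.1 + 1) * c j) (fun j _ => Nat.zero_le _) (mem_univ i)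

lemma forced_zero {N m : ℕ} {c : Fin N → ℕ} (h : (∑ i, (i.1 + 1) * c i) = m)
    {i : Fin N} (hi : m ≤ i.1) : c i = 0 := by
  by_contra hc
  have h1 : i.1 + 1 ≤ (i.1 + 1) * c i := Nat.le_mul_of_pos_right _ (Nat.pos_of_ne_zero hc)
  have h2 : (i.1 + 1) * c i ≤ m := h ▸
    Finset.single_le_sum (f := fun j : Fin N => (j.1 + 1) * c j)
      (fun j _ => Nat.zero_le _) (mem_univ i)
  omega

lemma forced_zero_k {N m k : ℕ} {c : Fin N → ℕ} (h : (∑ i, (i.1 + 1) * c i) = m)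
    (hk : (∑ i, c i) = k) {i : Fin N} (hi : m - k < i.1) : c i = 0 := by
  by_contra hc
  have hsplit : (∑ j, (j.1 + 1) * c j) = (∑ j, j.1 * c j) + ∑ j, c j := by
    rw [← Finset.sum_add_distrib]
    exact Finset.sum_congr rfl fun j _ => by ring
  have h1 : i.1 * c i ≤ ∑ j, j.1 * c j :=
    Finset.single_le_sum (f := fun j : Fin N => j.1 * c j)
      (fun j _ => Nat.zero_le _) (mem_univ i)
  have h2 : i.1 ≤ i.1 * c i := Nat.le_mul_of_pos_right _ (Nat.pos_of_ne_zero hc)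
  omega

/-- restriction of a product over `Fin N'` to `Fin N` when outer values vanish -/
lemma prod_restrict {M : Type*} [CommMonoid M] {N N' : ℕ} (h : N ≤ N') (c : Fin N' → ℕ)
    (hc : ∀ i : Fin N', N ≤ i.1 → c i = 0) (F : ℕ → ℕ → M) (hF : ∀ k, F k 0 = 1) :
    ∏ i : Fin N', F i.1 (c i) = ∏ j : Fin N, F j.1 (c (Fin.castLE h j)) := by
  rw [← Finset.prod_filter_of_ne (p := fun i : Fin N' => i.1 < N)
    (fun i _ hi => by
      by_contra hN
      exact hi (by rw [hc i (le_of_not_gt hN), hF]))]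
  refine Finset.prod_bij' (fun a ha => (⟨a.1, (mem_filter.mp ha).2⟩ : Fin N))
    (fun b _ => Fin.castLE h b) (fun a ha => mem_univ _)
    (fun b hb => mem_filter.mpr ⟨mem_univ _, b.2⟩) ?_ ?_ ?_
  · intro a ha; exact Fin.ext rfl
  · intro b hb; exact Fin.ext rfl
  · intro a ha; rfl

lemma sum_restrict {M : Type*} [AddCommMonoid M] {N N' : ℕ} (h : N ≤ N') (c : Fin N' → ℕ)
    (hc : ∀ i : Fin N', N ≤ i.1 → c i = 0) (F : ℕ → ℕ → M) (hF : ∀ k, F k 0 = 0) :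
    ∑ i : Fin N', F i.1 (c i) = ∑ j : Fin N, F j.1 (c (Fin.castLE h j)) := by
  rw [← Finset.sum_filter_of_ne (p := fun i : Fin N' => i.1 < N)
    (fun i _ hi => by
      by_contra hN
      exact hi (by rw [hc i (le_of_not_gt hN), hF]))]
  refine Finset.sum_bij' (fun a ha => (⟨a.1, (mem_filter.mp ha).2⟩ : Fin N))
    (fun b _ => Fin.castLE h b) (fun a ha => mem_univ _)
    (fun b hb => mem_filter.mpr ⟨mem_univ _, b.2⟩) ?_ ?_ ?_
  · intro a ha; exact Fin.ext rfl
  · intro b hb; exact Fin.ext rfl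
  · intro a ha; rfl

lemma dite_castLE {N N' : ℕ} (h : N ≤ N') (c : Fin N → ℕ) (j : Fin N) :
    (if hi : ((Fin.castLE h j : Fin N') : ℕ) < N then c ⟨((Fin.castLE h j : Fin N') : ℕ), hi⟩
      else 0) = c j := by
  rw [dif_pos (show ((Fin.castLE h j : Fin N') : ℕ) < N from j.2)]
  exact congrArg c (Fin.ext rfl)

lemma bellW_pad {N N' m : ℕ} (hm : m ≤ N) (h : N ≤ N') (x : ℕ → ℝ) :
    bellW N' m x = bellW N m x := by
  unfold bellW
  have hmN' : m ≤ N' := le_trans hm h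
  refine Finset.sum_bij' (i := fun c _ => fun j : Fin N => c (Fin.castLE h j))
    (j := fun c _ => fun i : Fin N' => if hi : i.1 < N then c ⟨i.1, hi⟩ else 0)
    ?_ ?_ ?_ ?_ ?_
  · intro c hc
    rw [mem_bellSet_iff] at hc ⊢
    rw [← sum_restrict h c (fun i hi => forced_zero hc (le_trans hm hi))
      (fun a b => (a + 1) * b) (fun k => mul_zero _)]
    exact hc
  · intro c hc
    rw [mem_bellSet_iff] at hc ⊢
    rw [sum_restrict h _ (fun i hi => dif_neg (not_lt.mpr hi))
      (fun a b => (a + 1) * b) (fun k => mul_zero _)]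
    rw [show (∑ j : Fin N, (↑j + 1) *
        (if hi : ((Fin.castLE h j : Fin N') : ℕ) < N
          then c ⟨((Fin.castLE h j : Fin N') : ℕ), hi⟩ else 0)) =
        ∑ j : Fin N, (↑j + 1) * c j from
      Finset.sum_congr rfl fun j _ => by rw [dite_castLE h c j]]
    exact hc
  · intro c hc
    rw [mem_bellSet_iff] at hc
    dsimp only
    funext i
    by_cases hi : i.1 < N
    · rw [dif_pos hi]
      exact congrArg c (Fin.ext rfl)
    · rw [dif_neg hi]
      exact (forced_zero hc (le_trans hm (le_of_not_gt hi))).symm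
  · intro c hc
    dsimp only
    funext j
    exact dite_castLE h c j
  · intro c hc
    rw [mem_bellSet_iff] at hc
    exact prod_restrict h c (fun i hi => forced_zero hc (le_trans hm hi)) (bwt x)
      (bwt_zero x)

lemma bellWk_pad {N N' m k : ℕ} (hm : m - k + 1 ≤ N) (h : N ≤ N') (x : ℕ → ℝ) :
    bellWk N' m k x = bellWk N m k x := by
  unfold bellWk
  have hfz : ∀ (c : Fin N' → ℕ), ((∑ i, (i.1 + 1) * c i) = m ∧ (∑ i, c i) = k) →
      ∀ i : Fin N', N ≤ i.1 → c i = 0 := by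
    intro c hc i hi
    exact forced_zero_k hc.1 hc.2 (by omega)
  refine Finset.sum_bij' (i := fun c _ => fun j : Fin N => c (Fin.castLE h j))
    (j := fun c _ => fun i : Fin N' => if hi : i.1 < N then c ⟨i.1, hi⟩ else 0)
    ?_ ?_ ?_ ?_ ?_
  · intro c hc
    rw [mem_bellSetk_iff] at hc ⊢
    constructor
    · rw [← sum_restrict h c (hfz c hc) (fun a b => (a + 1) * b) (fun k => mul_zero _)]
      exact hc.1
    · rw [← sum_restrict h c (hfz c hc) (fun _ b => b) (fun k => rfl)]
      exact hc.2
  · intro c hc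
    rw [mem_bellSetk_iff] at hc ⊢
    constructor
    · rw [sum_restrict h _ (fun i hi => dif_neg (not_lt.mpr hi))
        (fun a b => (a + 1) * b) (fun k => mul_zero _)]
      rw [show (∑ j : Fin N, (↑j + 1) *
          (if hi : ((Fin.castLE h j : Fin N') : ℕ) < N
            then c ⟨((Fin.castLE h j : Fin N') : ℕ), hi⟩ else 0)) =
          ∑ j : Fin N, (↑j + 1) * c j from
        Finset.sum_congr rfl fun j _ => by rw [dite_castLE h c j]]
      exact hc.1
    · rw [sum_restrict h _ (fun i hi => dif_neg (not_lt.mpr hi)) (fun _ b => b) (fun k => rfl)]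
      rw [show (∑ j : Fin N,
          (if hi : ((Fin.castLE h j : Fin N') : ℕ) < N
            then c ⟨((Fin.castLE h j : Fin N') : ℕ), hi⟩ else 0)) =
          ∑ j : Fin N, c j from Finset.sum_congr rfl fun j _ => by rw [dite_castLE h c j]]
      exact hc.2
  · intro c hc
    rw [mem_bellSetk_iff] at hc
    dsimp only
    funext i
    by_cases hi : i.1 < N
    · rw [dif_pos hi]
      exact congrArg c (Fin.ext rfl)
    · rw [dif_neg hi]
      exact (hfz c hc i (le_of_not_gt hi)).symm
  · intro c hc
    dsimp only
    funext j
    exact dite_castLE h c j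
  · intro c hc
    rw [mem_bellSetk_iff] at hc
    exact prod_restrict h c (hfz c hc) (bwt x) (bwt_zero x)

lemma bellW_zero (N : ℕ) (x : ℕ → ℝ) : bellW N 0 x = 1 := by
  unfold bellW
  have : ((Fintype.piFinset fun _ : Fin N => Finset.range (0 + 1)).filter
      (fun c => (∑ i, (i.1 + 1) * c i) = 0)) = {fun _ => 0} := by
    ext c
    rw [mem_bellSet_iff, Finset.mem_singleton]
    constructor
    · intro h
      funext i
      have := forced_zero h (Nat.zero_le i.1)
      exact this
    · intro h
      subst h
      simp
  rw [this, Finset.sum_singleton]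
  simp [bwt_zero]

lemma bellW_eq_sum_bellWk {N m : ℕ} (hm : 1 ≤ m) (x : ℕ → ℝ) :
    bellW N m x = ∑ k ∈ Icc 1 m, bellWk N m k x := by
  unfold bellW bellWk
  rw [← Finset.sum_fiberwise_of_maps_to (g := fun c : Fin N → ℕ => ∑ i, c i)
    (t := Icc 1 m) ?_ _]
  · refine Finset.sum_congr rfl fun k _ => ?_
    rw [Finset.filter_filter]
  · intro c hc
    rw [mem_bellSet_iff] at hc
    rw [mem_Icc]
    constructor
    · by_contra hk
      push_neg at hk
      have h0 : ∀ i, c i = 0 := by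
        intro i
        have := Finset.single_le_sum (f := fun j : Fin N => c j)
          (fun j _ => Nat.zero_le _) (mem_univ i)
        omega
      rw [Finset.sum_eq_zero (fun i _ => by rw [h0 i, mul_zero])] at hc
      omega
    · calc (∑ i, c i) ≤ ∑ i, (i.1 + 1) * c i :=
        Finset.sum_le_sum fun i _ => Nat.le_mul_of_pos_left _ (Nat.succ_pos _)
      _ = m := hc

lemma partialBell_eq (n k : ℕ) (x : ℕ → ℝ) :
    partialBell n k x = (Nat.factorial n : ℝ) * bellWk (n - k + 1) n k x := by
  unfold partialBell bellWk bwt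
  rw [Finset.mul_sum]

lemma completeBell_eq_bellW {n N : ℕ} (h2 : n ≤ N) (x : ℕ → ℝ) :
    completeBell n x = (Nat.factorial n : ℝ) * bellW N n x := by
  rcases Nat.eq_zero_or_pos n with hn | hn
  · subst hn
    rw [bellW_zero]
    simp [completeBell]
  · rw [completeBell, if_neg (Nat.pos_iff_ne_zero.mp hn),
      bellW_eq_sum_bellWk hn, Finset.mul_sum]
    refine Finset.sum_congr rfl fun k hk => ?_
    rw [mem_Icc] at hk
    rw [partialBell_eq]
    congr 1
    have h1 : n - k + 1 ≤ n := by omega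
    rw [← bellWk_pad (m := n) (k := k) le_rfl (le_trans h1 h2)]

lemma bwt_step (x : ℕ → ℝ) (i b : ℕ) :
    x (i + 1) / (Nat.factorial i : ℝ) * bwt x i b
      = (((i + 1) * (b + 1) : ℕ) : ℝ) * bwt x i (b + 1) := by
  unfold bwt
  have h1 : (Nat.factorial i : ℝ) ≠ 0 := Nat.cast_ne_zero.mpr (Nat.factorial_ne_zero i)
  have h2 : (Nat.factorial b : ℝ) ≠ 0 := Nat.cast_ne_zero.mpr (Nat.factorial_ne_zero b)
  have h3 : (Nat.factorial (i + 1) : ℝ) ≠ 0 := Nat.cast_ne_zero.mpr (Nat.factorial_ne_zero _)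
  have h4 : (Nat.factorial (i + 1) : ℝ) ^ b ≠ 0 := pow_ne_zero _ h3
  rw [Nat.factorial_succ b, Nat.factorial_succ i]
  push_cast
  field_simp
  ring

lemma bellW_rec {N m : ℕ} (hN : m + 1 ≤ N) (x : ℕ → ℝ) :
    ((m : ℝ) + 1) * bellW N (m + 1) x =
      ∑ i ∈ range (m + 1), x (i + 1) / (Nat.factorial i : ℝ) * bellW N (m - i) x := by
  have key : ∀ i : Fin N,
      (∑ c ∈ (Fintype.piFinset fun _ : Fin N => Finset.range (m + 1 + 1)).filter
          (fun c => (∑ j, (j.1 + 1) * c j) = m + 1),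
        (((i.1 + 1) * c i : ℕ) : ℝ) * ∏ j : Fin N, bwt x j.1 (c j)) =
      if i.1 < m + 1 then x (i.1 + 1) / (Nat.factorial i.1 : ℝ) * bellW N (m - i.1) x
        else 0 := by
    intro i
    have hsum_upd : ∀ (c : Fin N → ℕ) (b : ℕ),
        (∑ j, (j.1 + 1) * (Function.update c i b) j) =
          (i.1 + 1) * b + ∑ j ∈ univ.erase i, (j.1 + 1) * c j := by
      intro c b
      rw [← Finset.add_sum_erase univ (fun j : Fin N => (j.1 + 1) * Function.update c i b j)
        (mem_univ i), Function.update_self]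
      congr 1
      exact Finset.sum_congr rfl fun j hj => by
        rw [Function.update_of_ne (Finset.ne_of_mem_erase hj)]
    have hsum_dec : ∀ (c : Fin N → ℕ),
        (∑ j, (j.1 + 1) * c j) = (i.1 + 1) * c i + ∑ j ∈ univ.erase i, (j.1 + 1) * c j :=
      fun c => (Finset.add_sum_erase univ (fun j : Fin N => (j.1 + 1) * c j) (mem_univ i)).symm
    have hprod_upd : ∀ (c : Fin N → ℕ) (b : ℕ),
        (∏ j : Fin N, bwt x j.1 (Function.update c i b j)) =
          bwt x i.1 b * ∏ j ∈ univ.erase i, bwt x j.1 (c j) := by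
      intro c b
      rw [← Finset.mul_prod_erase univ (fun j : Fin N => bwt x j.1 (Function.update c i b j))
        (mem_univ i), Function.update_self]
      congr 1
      exact Finset.prod_congr rfl fun j hj => by
        rw [Function.update_of_ne (Finset.ne_of_mem_erase hj)]
    have hprod_dec : ∀ (c : Fin N → ℕ),
        (∏ j : Fin N, bwt x j.1 (c j)) = bwt x i.1 (c i) * ∏ j ∈ univ.erase i, bwt x j.1 (c j) :=
      fun c => (Finset.mul_prod_erase univ (fun j : Fin N => bwt x j.1 (c j)) (mem_univ i)).symm
    by_cases hi : i.1 < m + 1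
    · rw [if_pos hi]
      rw [← Finset.sum_filter_of_ne (p := fun c : Fin N → ℕ => c i ≠ 0)
        (fun c _ hne => by
          intro h0
          apply hne
          rw [h0, mul_zero, Nat.cast_zero, zero_mul])]
      rw [bellW, Finset.mul_sum]
      refine (Finset.sum_bij' (i := fun c _ => Function.update c i (c i + 1))
        (j := fun c _ => Function.update c i (c i - 1)) ?_ ?_ ?_ ?_ ?_).symm
      · -- maps S' into filtered set
        intro c hc
        rw [mem_bellSet_iff] at hc
        refine Finset.mem_filter.mpr ⟨(mem_bellSet_iff _).mpr ?_, ?_⟩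
        · rw [hsum_upd c (c i + 1)]
          rw [hsum_dec c] at hc
          have hexp : (i.1 + 1) * (c i + 1) = (i.1 + 1) * c i + (i.1 + 1) := by ring
          omega
        · show Function.update c i (c i + 1) i ≠ 0
          rw [Function.update_self]
          omega
      · -- maps filtered set into S'
        intro c hc
        obtain ⟨hc1, hne⟩ := Finset.mem_filter.mp hc
        rw [mem_bellSet_iff] at hc1
        rw [mem_bellSet_iff, hsum_upd c (c i - 1)]
        rw [hsum_dec c] at hc1
        obtain ⟨b, hb⟩ := Nat.exists_eq_succ_of_ne_zero hne
        rw [hb] at hc1 ⊢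
        simp only [Nat.succ_eq_add_one] at hc1
        simp only [Nat.succ_sub_one]
        have h5 : (i.1 + 1) * b + (∑ j ∈ univ.erase i, (j.1 + 1) * c j) + (i.1 + 1) = m + 1 := by
          rw [← hc1]; ring
        omega
      · -- left inverse
        intro c hc
        simp [Function.update_idem]
      · -- right inverse
        intro c hc
        obtain ⟨_, hne⟩ := Finset.mem_filter.mp hc
        have hb : c i - 1 + 1 = c i := Nat.succ_pred_eq_of_pos (Nat.pos_of_ne_zero hne)
        simp [Function.update_idem, hb]
      · -- values
        intro c hc
        rw [hprod_upd c (c i + 1), hprod_dec c, Function.update_self,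
          ← mul_assoc, ← mul_assoc, bwt_step]
    · rw [if_neg hi]
      refine Finset.sum_eq_zero fun c hc => ?_
      rw [mem_bellSet_iff] at hc
      rw [forced_zero hc (le_of_not_gt hi), mul_zero, Nat.cast_zero, zero_mul]
  calc ((m : ℝ) + 1) * bellW N (m + 1) x
      = ∑ c ∈ (Fintype.piFinset fun _ : Fin N => Finset.range (m + 1 + 1)).filter
          (fun c => (∑ j, (j.1 + 1) * c j) = m + 1),
        ∑ i : Fin N, (((i.1 + 1) * c i : ℕ) : ℝ) * ∏ j : Fin N, bwt x j.1 (c j) := by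
        rw [bellW, Finset.mul_sum]
        refine Finset.sum_congr rfl fun c hc => ?_
        rw [mem_bellSet_iff] at hc
        rw [← Finset.sum_mul]
        congr 1
        rw [← Nat.cast_sum, hc]
        push_cast
        ring
    _ = ∑ i : Fin N, ∑ c ∈ (Fintype.piFinset fun _ : Fin N => Finset.range (m + 1 + 1)).filter
          (fun c => (∑ j, (j.1 + 1) * c j) = m + 1),
        (((i.1 + 1) * c i : ℕ) : ℝ) * ∏ j : Fin N, bwt x j.1 (c j) := Finset.sum_comm
    _ = ∑ i : Fin N, (fun k : ℕ => if k < m + 1 then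
          x (k + 1) / (Nat.factorial k : ℝ) * bellW N (m - k) x else 0) i.1 :=
        Finset.sum_congr rfl fun i _ => key i
    _ = ∑ k ∈ range N, (if k < m + 1 then
          x (k + 1) / (Nat.factorial k : ℝ) * bellW N (m - k) x else 0) :=
        Fin.sum_univ_eq_sum_range (fun k : ℕ => if k < m + 1 then
          x (k + 1) / (Nat.factorial k : ℝ) * bellW N (m - k) x else 0) N
    _ = ∑ k ∈ range (m + 1), (if k < m + 1 then
          x (k + 1) / (Nat.factorial k : ℝ) * bellW N (m - k) x else 0) :=
        (Finset.sum_subset (Finset.range_subset_range.mpr hN) (fun k _ hk =>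
          if_neg (by rwa [mem_range] at hk))).symm
    _ = ∑ k ∈ range (m + 1), x (k + 1) / (Nat.factorial k : ℝ) * bellW N (m - k) x :=
        Finset.sum_congr rfl fun k hk => if_pos (mem_range.mp hk)

lemma completeBell_rec (m : ℕ) (x : ℕ → ℝ) :
    completeBell (m + 1) x =
      ∑ i ∈ range (m + 1), (m.choose i : ℝ) * x (i + 1) * completeBell (m - i) x := by
  rw [completeBell_eq_bellW (le_refl (m + 1)) x]
  have hfac : (Nat.factorial (m + 1) : ℝ) = (Nat.factorial m : ℝ) * ((m : ℝ) + 1) := by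
    rw [Nat.factorial_succ]; push_cast; ring
  rw [hfac, mul_assoc, bellW_rec (le_refl (m + 1)) x, Finset.mul_sum]
  refine Finset.sum_congr rfl fun i hi => ?_
  rw [mem_range, Nat.lt_succ_iff] at hi
  rw [completeBell_eq_bellW (show m - i ≤ m + 1 by omega) x]
  have h1 : (Nat.factorial i : ℝ) ≠ 0 := Nat.cast_ne_zero.mpr (Nat.factorial_ne_zero i)
  have h2 : (Nat.factorial (m - i) : ℝ) ≠ 0 := Nat.cast_ne_zero.mpr (Nat.factorial_ne_zero _)
  rw [Nat.cast_choose ℝ hi]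
  field_simp

open Real
open scoped NNReal ENNReal

section PartA

variable {A : ℕ → ℝ}

/-- boundedness of terms of a summable series -/
lemma bdd_of_summable {f : ℕ → ℝ} (h : Summable f) : ∃ C, 0 ≤ C ∧ ∀ n, |f n| ≤ C := by
  have h0 : Filter.Tendsto (fun n => |f n|) Filter.atTop (nhds 0) := by
    have := h.tendsto_atTop_zero.abs
    simpa using this
  obtain ⟨C, hC⟩ := h0.bddAbove_range
  exact ⟨C, le_trans (abs_nonneg (f 0)) (hC ⟨0, rfl⟩), fun n => hC ⟨n, rfl⟩⟩

lemma zig_bound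
    (hA : ∀ t : ℝ, |t| < π / 2 →
      HasSum (fun n : ℕ => A n * t ^ n / (Nat.factorial n : ℝ))
        (1 / Real.cos t + Real.tan t))
    {u : ℝ} (h0 : 0 < u) (hu : u < π / 2) :
    ∃ C, 0 ≤ C ∧ ∀ n, |A n| * u ^ n / (Nat.factorial n : ℝ) ≤ C := by
  obtain ⟨C, hC0, hC⟩ := bdd_of_summable (hA u (by rwa [abs_of_pos h0])).summable
  refine ⟨C, hC0, fun n => ?_⟩
  have := hC n
  rwa [abs_div, abs_mul, abs_pow, abs_of_pos h0, Nat.abs_cast] at this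

lemma zig_abs_summable
    (hA : ∀ t : ℝ, |t| < π / 2 →
      HasSum (fun n : ℕ => A n * t ^ n / (Nat.factorial n : ℝ))
        (1 / Real.cos t + Real.tan t))
    {t : ℝ} (ht : |t| < π / 2) :
    Summable (fun n => ‖A n * t ^ n / (Nat.factorial n : ℝ)‖) := by
  have hpi : 0 < π / 2 := by positivity
  obtain ⟨u, h0, htu, hu2⟩ : ∃ u, 0 < u ∧ |t| < u ∧ u < π / 2 :=
    ⟨(|t| + π / 2) / 2, by positivity, by linarith [abs_nonneg t], by linarith [abs_nonneg t]⟩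
  obtain ⟨C, hC0, hC⟩ := zig_bound hA h0 hu2
  have hr : |t| / u < 1 := (div_lt_one h0).mpr htu
  have hr0 : 0 ≤ |t| / u := by positivity
  refine Summable.of_nonneg_of_le (fun n => norm_nonneg _) (fun n => ?_)
    (((summable_geometric_of_lt_one hr0 hr).mul_left C))
  have key : ‖A n * t ^ n / (Nat.factorial n : ℝ)‖
      = (|A n| * u ^ n / (Nat.factorial n : ℝ)) * (|t| / u) ^ n := by
    rw [Real.norm_eq_abs, abs_div, abs_mul, abs_pow, Nat.abs_cast, div_pow]
    have hun : (u : ℝ) ^ n ≠ 0 := pow_ne_zero _ (ne_of_gt h0)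
    have hfn : (Nat.factorial n : ℝ) ≠ 0 := Nat.cast_ne_zero.mpr (Nat.factorial_ne_zero n)
    field_simp
  rw [key]
  exact mul_le_mul_of_nonneg_right (hC n) (pow_nonneg hr0 n)

lemma zig_deriv_summable
    (hA : ∀ t : ℝ, |t| < π / 2 →
      HasSum (fun n : ℕ => A n * t ^ n / (Nat.factorial n : ℝ))
        (1 / Real.cos t + Real.tan t))
    {ρ : ℝ} (h0 : 0 < ρ) (hρ : ρ < π / 2) :
    Summable (fun n => |A n| * ((n : ℝ) * ρ ^ (n - 1)) / (Nat.factorial n : ℝ)) := by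
  obtain ⟨u, hu0, hρu, hu2⟩ : ∃ u, 0 < u ∧ ρ < u ∧ u < π / 2 :=
    ⟨(ρ + π / 2) / 2, by positivity, by linarith, by linarith⟩
  obtain ⟨C, hC0, hC⟩ := zig_bound hA hu0 hu2
  have hr : ρ / u < 1 := (div_lt_one hu0).mpr hρu
  have hr0 : 0 ≤ ρ / u := by positivity
  have hs : Summable (fun n : ℕ => (C / ρ) * ((n : ℝ) ^ 1 * (ρ / u) ^ n)) :=
    (summable_pow_mul_geometric_of_norm_lt_one (R := ℝ) (r := ρ / u) 1
      (by rwa [Real.norm_eq_abs, abs_of_nonneg hr0])).mul_left _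
  refine Summable.of_nonneg_of_le (fun n => by positivity) (fun n => ?_) hs
  cases n with
  | zero => simp
  | succ k =>
    have hfn : (Nat.factorial (k + 1) : ℝ) ≠ 0 := Nat.cast_ne_zero.mpr (Nat.factorial_ne_zero _)
    have huk : (u : ℝ) ^ (k + 1) ≠ 0 := pow_ne_zero _ (ne_of_gt hu0)
    have key : |A (k + 1)| * (((k + 1 : ℕ) : ℝ) * ρ ^ (k + 1 - 1)) / (Nat.factorial (k + 1) : ℝ)
        = (|A (k + 1)| * u ^ (k + 1) / (Nat.factorial (k + 1) : ℝ))
          * (((k + 1 : ℕ) : ℝ) * ρ ^ k / u ^ (k + 1)) := by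
      simp only [Nat.add_sub_cancel]
      field_simp
    rw [key]
    have h2 : ((k + 1 : ℕ) : ℝ) * ρ ^ k / u ^ (k + 1) =
        (1 / ρ) * (((k + 1 : ℕ) : ℝ) ^ 1 * (ρ / u) ^ (k + 1)) := by
      rw [div_pow]
      have : (ρ : ℝ) ^ (k + 1) = ρ * ρ ^ k := by ring
      field_simp [this]
      ring
    calc (|A (k + 1)| * u ^ (k + 1) / (Nat.factorial (k + 1) : ℝ))
          * (((k + 1 : ℕ) : ℝ) * ρ ^ k / u ^ (k + 1))
        ≤ C * (((k + 1 : ℕ) : ℝ) * ρ ^ k / u ^ (k + 1)) := by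
          apply mul_le_mul_of_nonneg_right (hC (k + 1))
          positivity
      _ = C / ρ * (((k + 1 : ℕ) : ℝ) ^ 1 * (ρ / u) ^ (k + 1)) := by
          rw [h2]; ring


lemma zig_hasDeriv
    (hA : ∀ t : ℝ, |t| < π / 2 →
      HasSum (fun n : ℕ => A n * t ^ n / (Nat.factorial n : ℝ))
        (1 / Real.cos t + Real.tan t))
    {t : ℝ} (ht : |t| < π / 2) :
    HasSum (fun n => A (n + 1) * t ^ n / (Nat.factorial n : ℝ))
      (Real.sin t / Real.cos t ^ 2 + 1 / Real.cos t ^ 2) := by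
  have hpi : 0 < π / 2 := by positivity
  obtain ⟨ρ, hρ0, htρ, hρ⟩ : ∃ ρ, 0 < ρ ∧ |t| < ρ ∧ ρ < π / 2 :=
    ⟨(|t| + π / 2) / 2, by positivity, by linarith [abs_nonneg t], by linarith [abs_nonneg t]⟩
  set g : ℕ → ℝ → ℝ := fun n y => A n * y ^ n / (Nat.factorial n : ℝ) with hg_def
  set g' : ℕ → ℝ → ℝ := fun n y => A n * ((n : ℝ) * y ^ (n - 1)) / (Nat.factorial n : ℝ)
    with hg'_def
  set u : ℕ → ℝ := fun n => |A n| * ((n : ℝ) * ρ ^ (n - 1)) / (Nat.factorial n : ℝ) with hu_def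
  have hu : Summable u := zig_deriv_summable hA hρ0 hρ
  have hgderiv : ∀ n y, HasDerivAt (g n) (g' n y) y := by
    intro n y
    have h1 : HasDerivAt (fun y : ℝ => y ^ n) ((n : ℝ) * y ^ (n - 1)) y := hasDerivAt_pow n y
    exact (h1.const_mul (A n)).div_const _
  have hbound : ∀ n y, y ∈ Metric.ball (0 : ℝ) ρ → ‖g' n y‖ ≤ u n := by
    intro n y hy
    rw [Metric.mem_ball, dist_zero_right, Real.norm_eq_abs] at hy
    rw [hg'_def, hu_def]
    simp only
    rw [Real.norm_eq_abs, abs_div, abs_mul, abs_mul, abs_pow, Nat.abs_cast, Nat.abs_cast]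
    gcongr
  have hg0 : Summable fun n => g n 0 := by
    refine (hA 0 (by rwa [abs_zero])).summable
  have ht_mem : t ∈ Metric.ball (0 : ℝ) ρ := by
    rwa [Metric.mem_ball, dist_zero_right, Real.norm_eq_abs]
  have h0_mem : (0 : ℝ) ∈ Metric.ball (0 : ℝ) ρ := by
    rwa [Metric.mem_ball, dist_self]
  have hD : HasDerivAt (fun z => ∑' n, g n z) (∑' n, g' n t) t :=
    hasDerivAt_tsum_of_isPreconnected hu Metric.isOpen_ball (convex_ball _ _).isPreconnected
      (fun n y _ => hgderiv n y) hbound h0_mem hg0 ht_mem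
  -- the tsum agrees with sec + tan near t
  have heq : (fun z => ∑' n, g n z) =ᶠ[nhds t] (fun z => 1 / Real.cos z + Real.tan z) := by
    refine Filter.eventually_of_mem
      (Metric.isOpen_ball.mem_nhds (show t ∈ Metric.ball (0:ℝ) (π/2) by
        rwa [Metric.mem_ball, dist_zero_right, Real.norm_eq_abs])) (fun y hy => ?_)
    rw [Metric.mem_ball, dist_zero_right, Real.norm_eq_abs] at hy
    exact (hA y hy).tsum_eq
  have hDf : HasDerivAt (fun z => 1 / Real.cos z + Real.tan z) (∑' n, g' n t) t := by
    exact HasDerivAt.congr_of_eventuallyEq hD heq.symm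
  -- direct derivative computation
  have hc : Real.cos t ≠ 0 := by
    have : t ∈ Set.Ioo (-(π/2)) (π/2) := by
      constructor <;> [linarith [abs_lt.mp ht |>.1]; exact (abs_lt.mp ht).2]
    exact ne_of_gt (Real.cos_pos_of_mem_Ioo this)
  have hDf2 : HasDerivAt (fun z => 1 / Real.cos z + Real.tan z)
      (Real.sin t / Real.cos t ^ 2 + 1 / Real.cos t ^ 2) t := by
    have h1 : HasDerivAt (fun z => 1 / Real.cos z) (Real.sin t / Real.cos t ^ 2) t := by
      have := (Real.hasDerivAt_cos t).inv hc
      simp only [one_div]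
      exact this.congr_deriv (by ring)
    exact h1.add (Real.hasDerivAt_tan hc)
  have htsum : ∑' n, g' n t = Real.sin t / Real.cos t ^ 2 + 1 / Real.cos t ^ 2 :=
    hDf.unique hDf2
  have hsummable : Summable (fun n => g' n t) :=
    Summable.of_norm_bounded hu (fun n => hbound n t ht_mem)
  have hsum : HasSum (fun n => g' n t)
      (Real.sin t / Real.cos t ^ 2 + 1 / Real.cos t ^ 2) := htsum ▸ hsummable.hasSum
  -- shift the index
  have hshift : HasSum (fun n => g' (n + 1) t)
      (Real.sin t / Real.cos t ^ 2 + 1 / Real.cos t ^ 2) := by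
    have h0' : g' 0 t = 0 := by simp [hg'_def]
    have h1 : HasSum (fun n => g' n t)
        ((Real.sin t / Real.cos t ^ 2 + 1 / Real.cos t ^ 2) + ∑ i ∈ range 1, g' i t) := by
      simpa [h0'] using hsum
    exact (hasSum_nat_add_iff 1).mpr h1
  have hfun : (fun n => g' (n + 1) t) = fun n => A (n + 1) * t ^ n / (Nat.factorial n : ℝ) := by
    funext n
    rw [hg'_def]
    simp only [Nat.add_sub_cancel, Nat.factorial_succ]
    push_cast
    have hfn : (Nat.factorial n : ℝ) ≠ 0 := Nat.cast_ne_zero.mpr (Nat.factorial_ne_zero n)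
    field_simp
  rwa [hfun] at hshift

lemma zig_sq
    (hA : ∀ t : ℝ, |t| < π / 2 →
      HasSum (fun n : ℕ => A n * t ^ n / (Nat.factorial n : ℝ))
        (1 / Real.cos t + Real.tan t))
    {t : ℝ} (ht : |t| < π / 2) :
    HasSum (fun n => (∑ k ∈ range (n + 1), (n.choose k : ℝ) * A k * A (n - k))
        * t ^ n / (Nat.factorial n : ℝ))
      ((1 / Real.cos t + Real.tan t) ^ 2) := by
  set a : ℕ → ℝ := fun n => A n * t ^ n / (Nat.factorial n : ℝ) with ha_def
  have ha : HasSum a (1 / Real.cos t + Real.tan t) := hA t ht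
  have hnorm : Summable (fun n => ‖a n‖) := zig_abs_summable hA ht
  have hsum2 : Summable (fun n => ∑ k ∈ range (n + 1), a k * a (n - k)) :=
    (summable_norm_sum_mul_range_of_summable_norm hnorm hnorm).of_norm
  have htsum : (∑' n, a n) * (∑' n, a n) = ∑' n, ∑ k ∈ range (n + 1), a k * a (n - k) :=
    tsum_mul_tsum_eq_tsum_sum_range_of_summable_norm hnorm hnorm
  have hcauchy : HasSum (fun n => ∑ k ∈ range (n + 1), a k * a (n - k))
      ((1 / Real.cos t + Real.tan t) ^ 2) := by
    have := hsum2.hasSum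
    rwa [← htsum, ha.tsum_eq, ← sq] at this
  have hfun : (fun n => ∑ k ∈ range (n + 1), a k * a (n - k)) =
      fun n => (∑ k ∈ range (n + 1), (n.choose k : ℝ) * A k * A (n - k))
        * t ^ n / (Nat.factorial n : ℝ) := by
    funext n
    rw [Finset.sum_mul, Finset.sum_div]
    refine Finset.sum_congr rfl fun k hk => ?_
    rw [mem_range, Nat.lt_succ_iff] at hk
    rw [ha_def]
    simp only
    rw [Nat.cast_choose ℝ hk]
    have h1 : (Nat.factorial k : ℝ) ≠ 0 := Nat.cast_ne_zero.mpr (Nat.factorial_ne_zero k)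
    have h2 : (Nat.factorial (n - k) : ℝ) ≠ 0 := Nat.cast_ne_zero.mpr (Nat.factorial_ne_zero _)
    have h3 : (Nat.factorial n : ℝ) ≠ 0 := Nat.cast_ne_zero.mpr (Nat.factorial_ne_zero n)
    have ht' : t ^ n = t ^ k * t ^ (n - k) := by
      rw [← pow_add]
      congr 1
      omega
    field_simp
    rw [ht']
    ring
  rwa [hfun] at hcauchy

/-- uniqueness of real power series coefficients -/
lemma coeff_eq_zero {b : ℕ → ℝ}
    (hb : ∀ t : ℝ, |t| < 1 → HasSum (fun n => b n * t ^ n) 0) : ∀ n, b n = 0 := by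
  set p : FormalMultilinearSeries ℝ ℝ ℝ :=
    fun n => b n • ContinuousMultilinearMap.mkPiAlgebraFin ℝ n ℝ with hp_def
  have papply : ∀ (n : ℕ) (y : ℝ), (p n) (fun _ => y) = b n * y ^ n := by
    intro n y
    rw [hp_def]
    simp [ContinuousMultilinearMap.smul_apply,
      ContinuousMultilinearMap.mkPiAlgebraFin_apply, List.prod_ofFn]
  have hpn : ∀ n, ‖p n‖ = |b n| := by
    intro n
    rw [hp_def]
    simp only
    rw [norm_smul (b n) (ContinuousMultilinearMap.mkPiAlgebraFin ℝ n ℝ),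
      ContinuousMultilinearMap.norm_mkPiAlgebraFin, mul_one, Real.norm_eq_abs]

  obtain ⟨C, hC0, hC⟩ := bdd_of_summable (hb (1/2) (by rw [abs_of_pos (by norm_num : (0:ℝ) < 1/2)]; norm_num)).summable
  have hrad : ((1/2 : ℝ≥0) : ℝ≥0∞) ≤ p.radius := by
    refine p.le_radius_of_bound C fun n => ?_
    rw [hpn]
    have hcast : ((1/2 : ℝ≥0) : ℝ) = 1/2 := by norm_num
    rw [hcast]
    have := hC n
    rwa [abs_mul, abs_pow, abs_of_pos (show (0:ℝ) < 1/2 by norm_num)] at this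
  have hball : HasFPowerSeriesOnBall (fun _ : ℝ => (0 : ℝ)) p 0 ((1/2 : ℝ≥0) : ℝ≥0∞) := by
    refine ⟨hrad, by norm_num, fun {y} hy => ?_⟩
    rw [EMetric.mem_ball, edist_zero_right] at hy
    have hy' : |y| < 1 := by
      have : (‖y‖₊ : ℝ≥0∞) < ((1/2 : ℝ≥0) : ℝ≥0∞) := hy
      rw [ENNReal.coe_lt_coe] at this
      have h2 : ‖y‖ < 1/2 := by exact_mod_cast this
      rw [Real.norm_eq_abs] at h2
      linarith
    have := hb y hy'
    have hf : (fun n => p n fun _ => y) = fun n => b n * y ^ n := funext fun n => papply n y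
    rw [hf]
    simpa using this
  have hzero : p = 0 := hball.hasFPowerSeriesAt.eq_zero
  intro n
  have := papply n 1
  rw [hzero] at this
  simp at this
  exact this.symm
  
lemma trig_id {t : ℝ} (hc : Real.cos t ≠ 0) :
    2 * (Real.sin t / Real.cos t ^ 2 + 1 / Real.cos t ^ 2)
      - (1 / Real.cos t + Real.tan t) ^ 2 - 1 = 0 := by
  rw [Real.tan_eq_sin_div_cos]
  have hs := Real.sin_sq_add_cos_sq t
  field_simp
  nlinarith [hs]

lemma zig_A0
    (hA : ∀ t : ℝ, |t| < π / 2 →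
      HasSum (fun n : ℕ => A n * t ^ n / (Nat.factorial n : ℝ))
        (1 / Real.cos t + Real.tan t)) : A 0 = 1 := by
  have hpi : 0 < π / 2 := by positivity
  have h := hA 0 (by rwa [abs_zero])
  have hv : 1 / Real.cos 0 + Real.tan 0 = 1 := by
    rw [Real.cos_zero, Real.tan_zero]
    norm_num
  rw [hv] at h
  have hf : (fun n : ℕ => A n * (0:ℝ) ^ n / (Nat.factorial n : ℝ))
      = fun n => if n = 0 then A 0 else 0 := by
    funext n
    cases n with
    | zero => simp
    | succ k => simp
  rw [hf] at h
  exact ((hasSum_ite_eq 0 (A 0)).unique h)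

lemma zig_rec
    (hA : ∀ t : ℝ, |t| < π / 2 →
      HasSum (fun n : ℕ => A n * t ^ n / (Nat.factorial n : ℝ))
        (1 / Real.cos t + Real.tan t)) (n : ℕ) :
    2 * A (n + 1) = (if n = 0 then 1 else 0)
      + ∑ k ∈ range (n + 1), (n.choose k : ℝ) * A k * A (n - k) := by
  set b : ℕ → ℝ := fun n => (2 * A (n + 1)
      - ∑ k ∈ range (n + 1), (n.choose k : ℝ) * A k * A (n - k)) / (Nat.factorial n : ℝ)
      - (if n = 0 then 1 else 0) with hb_def
  have hb : ∀ t : ℝ, |t| < 1 → HasSum (fun n => b n * t ^ n) 0 := by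
    intro t ht
    have ht' : |t| < π / 2 := lt_of_lt_of_le ht (by linarith [Real.pi_gt_three])
    have hc : Real.cos t ≠ 0 := by
      have hmem : t ∈ Set.Ioo (-(π/2)) (π/2) :=
        ⟨by linarith [(abs_lt.mp ht').1], (abs_lt.mp ht').2⟩
      exact ne_of_gt (Real.cos_pos_of_mem_Ioo hmem)
    have h1 := zig_hasDeriv hA ht'
    have h2 := zig_sq hA ht'
    have h3 : HasSum (fun n : ℕ => (if n = 0 then (1:ℝ) else 0) * t ^ n) 1 := by
      have : (fun n : ℕ => (if n = 0 then (1:ℝ) else 0) * t ^ n)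
          = fun n : ℕ => if n = 0 then (1:ℝ) else 0 := by
        funext n
        cases n with
        | zero => simp
        | succ k => simp
      rw [this]
      exact hasSum_ite_eq 0 1
    have h4 := ((h1.mul_left 2).sub h2).sub h3
    have hval : 2 * (Real.sin t / Real.cos t ^ 2 + 1 / Real.cos t ^ 2)
        - (1 / Real.cos t + Real.tan t) ^ 2 - 1 = 0 := trig_id hc
    rw [hval] at h4
    have hfun : (fun n => 2 * (A (n + 1) * t ^ n / (Nat.factorial n : ℝ))
        - (∑ k ∈ range (n + 1), (n.choose k : ℝ) * A k * A (n - k))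
          * t ^ n / (Nat.factorial n : ℝ)
        - (if n = 0 then (1:ℝ) else 0) * t ^ n) = fun n => b n * t ^ n := by
      funext n
      rw [hb_def]
      simp only
      ring
    rwa [hfun] at h4
  have hz := coeff_eq_zero hb
  have hn := hz n
  rw [hb_def] at hn
  simp only at hn
  have hfn : (Nat.factorial n : ℝ) ≠ 0 := Nat.cast_ne_zero.mpr (Nat.factorial_ne_zero n)
  by_cases h0 : n = 0
  · subst h0
    rw [if_pos rfl] at hn ⊢
    simp [Nat.factorial] at hn
    simp [Finset.sum_range_one]
    linarith
  · rw [if_neg h0] at hn ⊢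
    rw [sub_zero, div_eq_zero_iff] at hn
    rcases hn with hn | hn
    · linarith [sub_eq_zero.mp hn]
    · exact absurd hn hfn

end PartA



open Real in
/-- Let `Aₙ` be the Euler zigzag numbers, defined by
`sec t + tan t = ∑_{n≥0} Aₙ·tⁿ/n!`.  Then `A_{n+1} = Bₙ(A₀, A₁, …, A_{n-1})` for `n ≥ 1`. -/
theorem zigzag_bell (A : ℕ → ℝ)
    (hA : ∀ t : ℝ, |t| < π / 2 →
      HasSum (fun n : ℕ => A n * t ^ n / (Nat.factorial n : ℝ))
        (1 / Real.cos t + Real.tan t)) :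
    ∀ n, 1 ≤ n → A (n + 1) = completeBell n (fun j => A (j - 1)) := by
  have hA0 : A 0 = 1 := zig_A0 hA
  have hrec := zig_rec hA
  have hA1 : A 1 = 1 := by
    have h := hrec 0
    simp [Finset.sum_range_one, hA0] at h
    linarith
  have hP : ∀ n, A (n + 2) = ∑ k ∈ Finset.range (n + 1),
      (n.choose k : ℝ) * A k * A (n + 1 - k) := by
    intro n
    have h := hrec (n + 1)
    rw [if_neg (Nat.succ_ne_zero n), zero_add] at h
    have h' : 2 * A (n + 2) = ∑ k ∈ Finset.range (n + 2),
        ((n + 1).choose k : ℝ) * A k * A (n + 1 - k) := h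
    have key : ∑ k ∈ Finset.range (n + 2), ((n + 1).choose k : ℝ) * A k * A (n + 1 - k)
        = 2 * ∑ k ∈ Finset.range (n + 1), (n.choose k : ℝ) * A k * A (n + 1 - k) := by
      rw [Finset.sum_range_succ']
      have e1 : ∀ k ∈ Finset.range (n + 1),
          ((n + 1).choose (k + 1) : ℝ) * A (k + 1) * A (n + 1 - (k + 1))
          = (n.choose k : ℝ) * A (k + 1) * A (n - k)
            + (n.choose (k + 1) : ℝ) * A (k + 1) * A (n + 1 - (k + 1)) := by
        intro k hk
        rw [Nat.choose_succ_succ]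
        push_cast
        simp only [Nat.succ_eq_add_one]
        ring
      rw [Finset.sum_congr rfl e1, Finset.sum_add_distrib]
      have e2 : ∑ k ∈ Finset.range (n + 1), (n.choose k : ℝ) * A (k + 1) * A (n - k)
          = ∑ k ∈ Finset.range (n + 1), (n.choose k : ℝ) * A k * A (n + 1 - k) := by
        rw [← Finset.sum_range_reflect
          (fun k => (n.choose k : ℝ) * A (k + 1) * A (n - k)) (n + 1)]
        refine Finset.sum_congr rfl fun k hk => ?_
        rw [Finset.mem_range, Nat.lt_succ_iff] at hk
        rw [show n + 1 - 1 - k = n - k from by omega]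
        rw [Nat.choose_symm hk]
        rw [show n - k + 1 = n + 1 - k from by omega,
          show n - (n - k) = k from by omega]
        ring
      have e3 : (∑ k ∈ Finset.range (n + 1),
            (n.choose (k + 1) : ℝ) * A (k + 1) * A (n + 1 - (k + 1)))
            + ((n + 1).choose 0 : ℝ) * A 0 * A (n + 1 - 0)
          = ∑ k ∈ Finset.range (n + 1), (n.choose k : ℝ) * A k * A (n + 1 - k) := by
        have h4 := Finset.sum_range_succ'
          (fun k => (n.choose k : ℝ) * A k * A (n + 1 - k)) (n + 1)
        have h5 := Finset.sum_range_succ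
          (fun k => (n.choose k : ℝ) * A k * A (n + 1 - k)) (n + 1)
        rw [h5] at h4
        have h6 : (n.choose (n + 1) : ℝ) = 0 := by
          rw [Nat.choose_succ_self]
          norm_num
        rw [h6, zero_mul, zero_mul, add_zero] at h4
        have h7 : ((n + 1).choose 0 : ℝ) = (n.choose 0 : ℝ) := by
          rw [Nat.choose_zero_right, Nat.choose_zero_right]
        rw [h7]
        linarith [h4]
      rw [e2]
      linarith [e3]
    rw [key] at h'
    linarith
  have hQ : ∀ n, A (n + 2) = completeBell (n + 1) (fun j => A (j - 1)) := by
    intro n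
    induction n using Nat.strong_induction_on with
    | _ n ih =>
      rw [completeBell_rec n (fun j => A (j - 1)), hP n]
      refine Finset.sum_congr rfl fun i hi => ?_
      rw [Finset.mem_range, Nat.lt_succ_iff] at hi
      simp only [Nat.add_sub_cancel]
      congr 1
      rcases Nat.lt_or_ge i n with hlt | hge
      · have h2 := ih (n - i - 1) (by omega)
        have h3 : n - i = (n - i - 1) + 1 := by omega
        rw [h3, ← h2]
        congr 1
        omega
      · have hin : i = n := le_antisymm hi hge
        subst hin
        rw [show i + 1 - i = 1 from by omega, show i - i = 0 from by omega]
        rw [show completeBell 0 (fun j => A (j - 1)) = 1 from by simp [completeBell]]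
        exact hA1
  intro n hn
  obtain ⟨m, rfl⟩ : ∃ m, n = m + 1 := ⟨n - 1, by omega⟩
  exact hQ m
end

section
/- Let A_n be the Euler zigzag numbers (coefficients of sec + tan: sec(t)+tan(t) = ∑_{n≥0} A_n t^n/n!). Then A_{n+2} = ∑_{i=0}^{n} C(n,i) · A_{n-i+1} · A_i for all n ≥ 0. -/
open Finset

private lemma coeff_unique {c d : ℕ → ℝ} {F : ℝ → ℝ} {r : ℝ} (hr : 0 < r)
    (hc : ∀ x : ℝ, |x| < r → HasSum (fun n => c n * x ^ n) (F x))
    (hd : ∀ x : ℝ, |x| < r → HasSum (fun n => d n * x ^ n) (F x)) : c = d := by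
  have key : ∀ e : ℕ → ℝ, (∀ x : ℝ, |x| < r → HasSum (fun n => e n * x ^ n) (F x)) →
      HasFPowerSeriesAt F (FormalMultilinearSeries.ofScalars ℝ e) 0 := by
    intro e he
    have hr2 : (0:ℝ) < r / 2 := by linarith
    set ρ : NNReal := ⟨r / 2, hr2.le⟩ with hρ
    have hρc : (ρ : ℝ) = r / 2 := rfl
    have hrad : (ρ : ENNReal) ≤ (FormalMultilinearSeries.ofScalars ℝ e).radius := by
      apply FormalMultilinearSeries.le_radius_of_summable
      have h := (he (r / 2) (by rw [abs_of_pos hr2]; linarith)).summable.abs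
      refine h.congr fun n => ?_
      rw [FormalMultilinearSeries.ofScalars_norm, abs_mul, abs_pow, abs_of_pos hr2,
        Real.norm_eq_abs, hρc]
    have hball : HasFPowerSeriesOnBall F (FormalMultilinearSeries.ofScalars ℝ e) 0 ρ := by
      refine ⟨hrad, ?_, fun {y} hy => ?_⟩
      · exact_mod_cast ENNReal.coe_pos.mpr (by exact_mod_cast hr2)
      · have hy' : |y| < r / 2 := by
          have := mem_emetric_ball_zero_iff.mp hy
          rw [← hρc, ← Real.norm_eq_abs]
          exact_mod_cast this
        simp only [FormalMultilinearSeries.ofScalars_apply_eq, smul_eq_mul, zero_add]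
        exact he y (by linarith)
    exact hball.hasFPowerSeriesAt
  have h := (key c hc).eq_formalMultilinearSeries (key d hd)
  exact (FormalMultilinearSeries.ofScalars_series_eq_iff ℝ c d).mp h

set_option maxHeartbeats 1000000 in
open Real in
/-- The Euler zigzag numbers `Aₙ`, defined by `sec t + tan t = ∑_{n≥0} Aₙ·tⁿ/n!`, satisfy
`A_{n+2} = ∑_{i=0}^{n} C(n,i)·A_{n-i+1}·A_i`. -/
theorem zigzag_recurrence (A : ℕ → ℝ)
    (hA : ∀ t : ℝ, |t| < π / 2 →
      HasSum (fun n : ℕ => A n * t ^ n / (Nat.factorial n : ℝ))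
        (1 / Real.cos t + Real.tan t)) :
    ∀ n, A (n + 2) =
      ∑ i ∈ Finset.range (n + 1), (Nat.choose n i : ℝ) * A (n - i + 1) * A i := by
  set f : ℝ → ℝ := fun t => 1 / Real.cos t + Real.tan t with hf
  set c : ℕ → ℝ := fun n => A n / (Nat.factorial n : ℝ) with hc
  have hπ : (1.3 : ℝ) < π / 2 := by nlinarith [Real.pi_gt_d6]
  have h1 : ∀ t : ℝ, |t| < π / 2 → HasSum (fun n => c n * t ^ n) (f t) := by
    intro t ht
    have heq : (fun n : ℕ => c n * t ^ n)
        = fun n : ℕ => A n * t ^ n / (Nat.factorial n : ℝ) := by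
      funext n; simp only [hc]; ring
    rw [heq]
    exact hA t ht
  -- coefficient bound
  have hsum54 : HasSum (fun n => c n * (5/4 : ℝ) ^ n) (f (5/4)) :=
    h1 (5/4) (by rw [abs_of_pos (by norm_num)]; linarith)
  obtain ⟨C, hC⟩ : ∃ C, ∀ n, |c n| * (5/4 : ℝ) ^ n ≤ C := by
    obtain ⟨C, hC⟩ := (hsum54.summable.tendsto_atTop_zero.abs).bddAbove_range
    refine ⟨C, fun n => ?_⟩
    have := hC (Set.mem_range_self (f := fun n => |c n * (5/4:ℝ)^n|) n)
    rwa [abs_mul, abs_pow, (by norm_num : |(5/4 : ℝ)| = 5/4)] at this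
  have hC0 : 0 ≤ C := le_trans (by positivity) (hC 0)
  have cbound : ∀ n, |c n| ≤ C * (4/5 : ℝ) ^ n := by
    intro n
    have h2 : |c n| = |c n| * (5/4 : ℝ) ^ n * (4/5 : ℝ) ^ n := by
      rw [mul_assoc, ← mul_pow]; norm_num
    rw [h2]
    exact mul_le_mul_of_nonneg_right (hC n) (by positivity)
  -- the series and its derivative series
  set g : ℕ → ℝ → ℝ := fun n x => c n * x ^ n with hg
  set g' : ℕ → ℝ → ℝ := fun n x => c n * ((n : ℝ) * x ^ (n - 1)) with hg'
  set u : ℕ → ℝ := fun n => C * ((n : ℝ) * (4/5 : ℝ) ^ n) with hu_def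
  have hu : Summable u := by
    have h := (summable_pow_mul_geometric_of_norm_lt_one 1
      (r := (4/5 : ℝ)) (by
        rw [Real.norm_eq_abs, abs_of_pos (by norm_num : (0:ℝ) < 4/5)]; norm_num)).mul_left C
    refine h.congr fun n => ?_
    simp only [hu_def, pow_one]
  set s : Set ℝ := Set.Ioo (-1 : ℝ) 1 with hs
  have habs : ∀ y ∈ s, |y| < π / 2 := by
    intro y hy
    have : |y| < 1 := abs_lt.mpr ⟨hy.1, hy.2⟩
    linarith
  have hgd : ∀ n (y : ℝ), y ∈ s → HasDerivAt (g n) (g' n y) y := by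
    intro n y _
    exact (hasDerivAt_pow n y).const_mul (c n)
  have hgb : ∀ n (y : ℝ), y ∈ s → ‖g' n y‖ ≤ u n := by
    intro n y hy
    have hy1 : |y| ≤ 1 := (abs_lt.mpr ⟨hy.1, hy.2⟩).le
    have : ‖g' n y‖ = |c n| * ((n : ℝ) * |y| ^ (n-1)) := by
      rw [Real.norm_eq_abs]
      simp only [hg']
      rw [abs_mul, abs_mul, abs_pow, Nat.abs_cast]
    rw [this]
    calc |c n| * ((n : ℝ) * |y| ^ (n-1)) ≤ (C * (4/5:ℝ)^n) * ((n : ℝ) * 1) := by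
          apply mul_le_mul (cbound n) _ (by positivity) (mul_nonneg hC0 (by positivity))
          exact mul_le_mul_of_nonneg_left (pow_le_one₀ (abs_nonneg _) hy1) (Nat.cast_nonneg n)
      _ = u n := by simp only [hu_def]; ring
  have hg0 : Summable fun n => g n 0 :=
    (h1 0 (by rw [abs_zero]; linarith)).summable
  have h0s : (0 : ℝ) ∈ s := by constructor <;> norm_num
  have hderiv_tsum : ∀ y ∈ s, HasDerivAt (fun z => ∑' n, g n z) (∑' n, g' n y) y :=
    fun y hy => hasDerivAt_tsum_of_isPreconnected hu isOpen_Ioo isPreconnected_Ioo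
      hgd hgb h0s hg0 hy
  have hFeq : ∀ y ∈ s, f y = ∑' n, g n y :=
    fun y hy => (h1 y (habs y hy)).tsum_eq.symm
  have hDf : ∀ y ∈ s, HasDerivAt f (∑' n, g' n y) y := by
    intro y hy
    refine (hderiv_tsum y hy).congr_of_eventuallyEq ?_
    filter_upwards [isOpen_Ioo.mem_nhds hy] with z hz
    exact hFeq z hz
  -- explicit derivative
  have hDf2 : ∀ y : ℝ, |y| < π / 2 → HasDerivAt f ((1 + f y ^ 2) / 2) y := by
    intro y hy
    have hy' := abs_lt.mp hy
    have hcos : 0 < Real.cos y := Real.cos_pos_of_mem_Ioo ⟨hy'.1, hy'.2⟩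
    have hc0 : Real.cos y ≠ 0 := ne_of_gt hcos
    have h1d : HasDerivAt (fun t => 1 / Real.cos t) (Real.sin y / Real.cos y ^ 2) y := by
      have h := (Real.hasDerivAt_cos y).inv hc0
      simp only [one_div]
      refine h.congr_deriv ?_
      ring
    have h2d : HasDerivAt Real.tan (1 / Real.cos y ^ 2) y := Real.hasDerivAt_tan hc0
    have h3 := h1d.add h2d
    have hval : (1 + f y ^ 2) / 2 = Real.sin y / Real.cos y ^ 2 + 1 / Real.cos y ^ 2 := by
      simp only [hf]
      rw [Real.tan_eq_sin_div_cos]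
      have hsq := Real.sin_sq_add_cos_sq y
      field_simp
      nlinarith [hsq]
    rw [hval]
    exact h3
  have hkey : ∀ y ∈ s, ∑' n, g' n y = (1 + f y ^ 2) / 2 :=
    fun y hy => (hDf y hy).unique (hDf2 y (habs y hy))
  -- LHS power series for the derivative
  have hLHS : ∀ x : ℝ, |x| < 1 →
      HasSum (fun n : ℕ => ((n : ℝ) + 1) * c (n + 1) * x ^ n) ((1 + f x ^ 2) / 2) := by
    intro y hy
    have hys : y ∈ s := ⟨by cases abs_lt.mp hy; linarith, (abs_lt.mp hy).2⟩
    have hsummg' : Summable (fun n => g' n y) :=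
      Summable.of_norm_bounded hu (fun n => hgb n y hys)
    have hsum : HasSum (fun n => g' n y) ((1 + f y ^ 2) / 2) := by
      have := hsummg'.hasSum
      rwa [hkey y hys] at this
    have hshift : HasSum (fun n => g' (n + 1) y) ((1 + f y ^ 2) / 2) := by
      refine (hasSum_nat_add_iff (f := fun m => g' m y) 1).mpr ?_
      have h00 : g' 0 y = 0 := by simp [hg']
      simpa [h00] using hsum
    have heq : (fun n => g' (n + 1) y)
        = fun n : ℕ => ((n : ℝ) + 1) * c (n + 1) * y ^ n := by
      funext n
      simp only [hg', Nat.add_sub_cancel]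
      push_cast
      ring
    rwa [heq] at hshift
  -- RHS power series: Cauchy product
  set e : ℕ → ℝ := fun n =>
    ((if n = 0 then (1:ℝ) else 0) + ∑ k ∈ range (n + 1), c k * c (n - k)) / 2 with he
  have hRHS : ∀ x : ℝ, |x| < 1 → HasSum (fun n : ℕ => e n * x ^ n) ((1 + f x ^ 2) / 2) := by
    intro y hy
    have hys : y ∈ s := ⟨by cases abs_lt.mp hy; linarith, (abs_lt.mp hy).2⟩
    have hy1 : |y| ≤ 1 := hy.le
    have hnorm : Summable fun n => ‖c n * y ^ n‖ := by
      refine Summable.of_nonneg_of_le (fun n => norm_nonneg _) (fun n => ?_)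
        ((summable_geometric_of_lt_one (by norm_num) (by norm_num : (4/5:ℝ) < 1)).mul_left C)
      rw [Real.norm_eq_abs, abs_mul, abs_pow]
      calc |c n| * |y| ^ n ≤ (C * (4/5:ℝ)^n) * 1 :=
            mul_le_mul (cbound n) (pow_le_one₀ (abs_nonneg _) hy1) (by positivity)
              (mul_nonneg hC0 (by positivity))
        _ = C * (4/5:ℝ)^n := by ring
    have hmul := hasSum_sum_range_mul_of_summable_norm hnorm hnorm
    rw [(h1 y (habs y hys)).tsum_eq] at hmul
    have heq : (fun n => ∑ k ∈ range (n + 1), (c k * y ^ k) * (c (n - k) * y ^ (n - k)))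
        = fun n => (∑ k ∈ range (n + 1), c k * c (n - k)) * y ^ n := by
      funext n
      rw [Finset.sum_mul]
      refine Finset.sum_congr rfl fun k hk => ?_
      have hk' : k ≤ n := Nat.lt_succ_iff.mp (Finset.mem_range.mp hk)
      have hpow : y ^ k * y ^ (n - k) = y ^ n := by
        rw [← pow_add, Nat.add_sub_cancel' hk']
      rw [mul_mul_mul_comm, hpow]
    rw [heq] at hmul
    have hone : HasSum (fun n : ℕ => (if n = 0 then (1:ℝ) else 0) * y ^ n) 1 := by
      have heq1 : (fun n : ℕ => (if n = 0 then (1:ℝ) else 0) * y ^ n)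
          = fun n : ℕ => if n = 0 then (1:ℝ) else 0 := by
        funext n
        split_ifs with h
        · subst h; simp
        · simp
      rw [heq1]
      exact hasSum_ite_eq 0 1
    have hcomb := (hone.add hmul).div_const 2
    have heq2 : (fun n : ℕ => ((if n = 0 then (1:ℝ) else 0) * y ^ n
          + (∑ k ∈ range (n + 1), c k * c (n - k)) * y ^ n) / 2)
        = fun n : ℕ => e n * y ^ n := by
      funext n; simp only [he]; ring
    rw [heq2] at hcomb
    have hval : (1 + f y * f y) / 2 = (1 + f y ^ 2) / 2 := by ring
    rwa [hval] at hcomb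
  -- uniqueness of coefficients
  have huniq := coeff_unique (F := fun y : ℝ => (1 + f y ^ 2) / 2) one_pos hLHS hRHS
  have hrec : ∀ m : ℕ, ((m : ℝ) + 1) * c (m + 1) = e m := fun m => congrFun huniq m
  -- the first-order recurrence for A
  have key : ∀ m : ℕ, 2 * A (m + 1)
      = (if m = 0 then (1:ℝ) else 0)
        + ∑ k ∈ range (m + 1), (Nat.choose m k : ℝ) * A k * A (m - k) := by
    intro m
    have hmf : ((Nat.factorial m : ℝ)) ≠ 0 := Nat.cast_ne_zero.mpr m.factorial_ne_zero
    have h := hrec m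
    have hm : ((m : ℝ) + 1) * c (m + 1) = A (m + 1) / (Nat.factorial m : ℝ) := by
      simp only [hc, Nat.factorial_succ]
      push_cast
      have : ((m:ℝ) + 1) ≠ 0 := by positivity
      field_simp
    rw [hm, he] at h
    have hsum : (Nat.factorial m : ℝ) * ∑ k ∈ range (m + 1), c k * c (m - k)
        = ∑ k ∈ range (m + 1), (Nat.choose m k : ℝ) * A k * A (m - k) := by
      rw [Finset.mul_sum]
      refine Finset.sum_congr rfl fun k hk => ?_
      have hk' : k ≤ m := Nat.lt_succ_iff.mp (Finset.mem_range.mp hk)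
      simp only [hc]
      rw [Nat.cast_choose ℝ hk']
      have h1 : ((Nat.factorial k : ℝ)) ≠ 0 := Nat.cast_ne_zero.mpr k.factorial_ne_zero
      have h2 : ((Nat.factorial (m - k) : ℝ)) ≠ 0 :=
        Nat.cast_ne_zero.mpr (m - k).factorial_ne_zero
      field_simp
    have h2 : 2 * A (m + 1) = (Nat.factorial m : ℝ) * (if m = 0 then (1:ℝ) else 0)
        + (Nat.factorial m : ℝ) * ∑ k ∈ range (m + 1), c k * c (m - k) := by
      have hA1 : A (m + 1) / (Nat.factorial m : ℝ)
          = ((if m = 0 then (1:ℝ) else 0) + ∑ k ∈ range (m + 1), c k * c (m - k)) / 2 := h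
      field_simp at hA1
      linarith
    rw [hsum] at h2
    rcases eq_or_ne m 0 with rfl | hm0
    · simpa using h2
    · simp only [hm0, if_false, mul_zero, zero_add] at h2 ⊢
      exact h2
  -- final combinatorial step
  intro n
  have h2 := key (n + 1)
  rw [if_neg (Nat.succ_ne_zero n), zero_add] at h2
  have hS1 : ∑ k ∈ range (n + 1), (Nat.choose n k : ℝ) * A (k + 1) * A (n - k)
      = ∑ i ∈ range (n + 1), (Nat.choose n i : ℝ) * A (n - i + 1) * A i := by
    rw [← Finset.sum_range_reflect]
    refine Finset.sum_congr rfl fun j hj => ?_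
    have hj' : j ≤ n := Nat.lt_succ_iff.mp (Finset.mem_range.mp hj)
    simp only [Nat.add_sub_cancel]
    rw [Nat.choose_symm hj', Nat.sub_sub_self hj']
  have hS3 : ∑ k ∈ range (n + 1), (Nat.choose n k : ℝ) * A k * A (n + 1 - k)
      = ∑ i ∈ range (n + 1), (Nat.choose n i : ℝ) * A (n - i + 1) * A i := by
    rw [← Finset.sum_range_reflect]
    rw [← hS1]
    refine Finset.sum_congr rfl fun j hj => ?_
    have hj' : j ≤ n := Nat.lt_succ_iff.mp (Finset.mem_range.mp hj)
    have hnj : n + 1 - (n - j) = j + 1 := by omega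
    simp only [Nat.add_sub_cancel]
    rw [Nat.choose_symm hj', hnj]
    ring
  have hS2 : (∑ k ∈ range (n + 1), (Nat.choose n (k + 1) : ℝ) * A (k + 1) * A (n - k))
      + A 0 * A (n + 1)
      = ∑ i ∈ range (n + 1), (Nat.choose n i : ℝ) * A i * A (n + 1 - i) := by
    have hstep := Finset.sum_range_succ'
      (fun k => (Nat.choose n k : ℝ) * A k * A (n + 1 - k)) (n + 1)
    have hlast : ∑ k ∈ range (n + 2), (Nat.choose n k : ℝ) * A k * A (n + 1 - k)
        = ∑ k ∈ range (n + 1), (Nat.choose n k : ℝ) * A k * A (n + 1 - k) := by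
      rw [Finset.sum_range_succ, Nat.choose_succ_self]
      simp
    rw [hlast] at hstep
    simp only [Nat.succ_sub_succ, Nat.choose_zero_right, Nat.cast_one, one_mul,
      Nat.sub_zero] at hstep
    linarith [hstep]
  rw [hS3] at hS2
  have hsplit : ∑ k ∈ range (n + 2), ((n + 1).choose k : ℝ) * A k * A (n + 1 - k)
      = 2 * ∑ i ∈ range (n + 1), (Nat.choose n i : ℝ) * A (n - i + 1) * A i := by
    rw [Finset.sum_range_succ' (fun k => ((n + 1).choose k : ℝ) * A k * A (n + 1 - k)) (n + 1)]
    simp only [Nat.succ_sub_succ, Nat.choose_succ_succ, Nat.cast_add,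
      Nat.choose_zero_right, Nat.cast_one, one_mul, Nat.sub_zero]
    have hexp : ∑ k ∈ range (n + 1),
        (((n.choose k : ℝ)) + (n.choose (k + 1) : ℝ)) * A (k + 1) * A (n - k)
        = (∑ k ∈ range (n + 1), (n.choose k : ℝ) * A (k + 1) * A (n - k))
          + ∑ k ∈ range (n + 1), (n.choose (k + 1) : ℝ) * A (k + 1) * A (n - k) := by
      rw [← Finset.sum_add_distrib]
      exact Finset.sum_congr rfl fun k _ => by ring
    rw [hexp, hS1]
    linarith [hS2]
  rw [hsplit] at h2
  linarith
end
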